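/- The generating function Irr(z) of irreducible 3-noncrossing perfect matchings satisfies Irr(z) = 1 + Σ_{h≥1} S(h) · z^h · F_3(z)^{2h−1}; concretely, the constant coefficient of Irr(z) is 1 and, for every n ≥ 1, the coefficient of z^n in Irr(z) equals Σ_{h=1}^{n} S(h) · [z^{n−h}] F_3(z)^{2h−1}. -/

import Mathlib

open scoped Classical

noncomputable section

/-- A diagram on `n` vertices: a set of arcs `(i,j)` with `1 ≤ i < j ≤ n`
in which each vertex belongs to at most one arc. -/
structure Diagram (n : ℕ) where
  arcs : Finset (ℕ × ℕ)
  valid : ∀ a ∈ arcs, 1 ≤ a.1 ∧ a.1 < a.2 ∧ a.2 ≤ n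
  disj : ∀ a ∈ arcs, ∀ b ∈ arcs, a ≠ b →
    a.1 ≠ b.1 ∧ a.1 ≠ b.2 ∧ a.2 ≠ b.1 ∧ a.2 ≠ b.2

namespace Diagram

variable {n : ℕ}

/-- `D` contains a `k`-crossing: arcs `(i₁,j₁),…,(i_k,j_k)` with
`i₁ < i₂ < ⋯ < i_k < j₁ < j₂ < ⋯ < j_k`. -/
def HasCrossing (D : Diagram n) (k : ℕ) : Prop :=
  ∃ a : Fin k → ℕ × ℕ, (∀ t, a t ∈ D.arcs) ∧
    (∀ s t : Fin k, s < t → (a s).1 < (a t).1) ∧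
    (∀ s t : Fin k, s < t → (a s).2 < (a t).2) ∧
    (∀ s t : Fin k, (a s).1 < (a t).2)

/-- `D` is `k`-noncrossing: it has no `k`-crossing. -/
def Noncrossing (k : ℕ) (D : Diagram n) : Prop := ¬ D.HasCrossing k

/-- `D` is a perfect matching: it has no isolated vertices. -/
def Perfect (D : Diagram n) : Prop :=
  ∀ v : ℕ, 1 ≤ v → v ≤ n → ∃ a ∈ D.arcs, v = a.1 ∨ v = a.2

/-- `(i,j),(i+1,j-1),…,(i+σ-1,j-σ+1)` is a (maximal) stack of size `σ` in `D`. -/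
def IsStack (D : Diagram n) (i j σ : ℕ) : Prop :=
  0 < σ ∧ (∀ t < σ, (i + t, j - t) ∈ D.arcs) ∧
    (i - 1, j + 1) ∉ D.arcs ∧ (i + σ, j - σ) ∉ D.arcs

/-- Every stack of `D` has size at least `τ`. -/
def MinStack (τ : ℕ) (D : Diagram n) : Prop :=
  ∀ i j σ : ℕ, D.IsStack i j σ → τ ≤ σ

/-- Every arc of `D` has length at least `lam`. -/
def MinArcLength (lam : ℕ) (D : Diagram n) : Prop :=
  ∀ a ∈ D.arcs, lam ≤ a.2 - a.1

/-- A modular `k`-noncrossing diagram: `k`-noncrossing, every stack has size at least 2,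
and every arc has length at least 4. -/
def Modular (k : ℕ) (D : Diagram n) : Prop :=
  D.Noncrossing k ∧ MinStack 2 D ∧ MinArcLength 4 D

/-- Two arcs cross (i.e. form a 2-crossing). -/
def Crosses (a b : ℕ × ℕ) : Prop :=
  (a.1 < b.1 ∧ b.1 < a.2 ∧ a.2 < b.2) ∨ (b.1 < a.1 ∧ a.1 < b.2 ∧ b.2 < a.2)

/-- The number of 1-arcs (arcs of length 1) of `D`. -/
def oneArcs (D : Diagram n) : ℕ :=
  (D.arcs.filter fun a => a.2 = a.1 + 1).card

/-- The number of pairs of mutually crossing 2-arcs of `D` (`C₂`-elements). -/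
def twoArcCrossPairs (D : Diagram n) : ℕ :=
  ((D.arcs ×ˢ D.arcs).filter fun p =>
    p.1.2 = p.1.1 + 2 ∧ p.2.2 = p.2.1 + 2 ∧ p.1.1 < p.2.1 ∧ Crosses p.1 p.2).card

/-- The number of `C₃`-elements of `D`: pairs `(α,β)` where `α` is the unique 2-arc
crossing `β` and `β` has length at least 3. -/
def c3count (D : Diagram n) : ℕ :=
  (D.arcs.filter fun b => 3 ≤ b.2 - b.1 ∧
    ∃! a : ℕ × ℕ, a ∈ D.arcs ∧ a.2 = a.1 + 2 ∧ Crosses a b).card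

/-- The number of `C₄`-elements of `D`: triples `(α₁,β,α₂)` where `α₁ ≠ α₂` are
2-arcs crossing `β`. -/
def c4count (D : Diagram n) : ℕ :=
  (D.arcs.filter fun b => ∃ a₁ ∈ D.arcs, ∃ a₂ ∈ D.arcs, a₁ ≠ a₂ ∧
    a₁.2 = a₁.1 + 2 ∧ a₂.2 = a₂.1 + 2 ∧ Crosses a₁ b ∧ Crosses a₂ b).card

/-- A `V_k`-shape: a `k`-noncrossing perfect matching all of whose stacks have
size exactly 1. -/
def IsShape (k : ℕ) (D : Diagram n) : Prop :=
  D.Noncrossing k ∧ D.Perfect ∧ ∀ i j σ : ℕ, D.IsStack i j σ → σ = 1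

/-- The dependency graph of `D`: one vertex per arc, two vertices adjacent iff the
corresponding arcs cross. -/
def depGraph (D : Diagram n) : SimpleGraph {a : ℕ × ℕ // a ∈ D.arcs} :=
  SimpleGraph.fromRel fun a b => Crosses a.1 b.1

/-- A skeleton diagram: every arc crosses some other arc and the dependency
graph is connected. -/
def IsSkeleton (D : Diagram n) : Prop :=
  (∀ a ∈ D.arcs, ∃ b ∈ D.arcs, Crosses a b) ∧ D.depGraph.Connected

/-- `D` is irreducible: no vertex `ℓ` splits the arc set into two nonempty parts
`{(i,j) : j < ℓ}` and `{(i,j) : i ≥ ℓ}` covering all arcs. -/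
def Irreducible (D : Diagram n) : Prop :=
  ¬ ∃ ℓ : ℕ, (∃ a ∈ D.arcs, a.2 < ℓ) ∧ (∃ a ∈ D.arcs, ℓ ≤ a.1) ∧
      ∀ a ∈ D.arcs, a.2 < ℓ ∨ ℓ ≤ a.1

/-- A canonical 3-noncrossing skeleton diagram: a 3-noncrossing skeleton diagram
in which every stack has size at least 3 and every arc has length at least 4. -/
def CanonicalSkeleton (D : Diagram n) : Prop :=
  D.Noncrossing 3 ∧ D.IsSkeleton ∧ MinStack 3 D ∧ MinArcLength 4 D

end Diagram

/-- `Qcount k n` : the number of modular `k`-noncrossing diagrams on `n` vertices. -/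
def Qcount (k n : ℕ) : ℕ := Nat.card {D : Diagram n // D.Modular k}

/-- `fMatch k n = f_k(2n,0)` : the number of `k`-noncrossing perfect matchings
on `2n` vertices. -/
def fMatch (k n : ℕ) : ℕ :=
  Nat.card {D : Diagram (2 * n) // D.Noncrossing k ∧ D.Perfect}

/-- `F_k(z) = Σ_{n ≥ 0} f_k(2n,0) zⁿ`. -/
def Fgf (k : ℕ) : PowerSeries ℚ := PowerSeries.mk fun n => (fMatch k n : ℚ)

/-- `icount2 k s m = i_k(s,m)` : the number of `V_k`-shapes with `s` arcs and
`m` 1-arcs. -/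
def icount2 (k s m : ℕ) : ℕ :=
  Nat.card {D : Diagram (2 * s) // D.IsShape k ∧ D.oneArcs = m}

/-- `icount3 k s u₁ u₂ = i_k(s,u₁,u₂)` : the number of `V_k`-shapes with `s` arcs,
`u₁` 1-arcs and `u₂` pairs of mutually crossing 2-arcs. -/
def icount3 (k s u₁ u₂ : ℕ) : ℕ :=
  Nat.card {D : Diagram (2 * s) // D.IsShape k ∧ D.oneArcs = u₁ ∧
    D.twoArcCrossPairs = u₂}

/-- `icount5 k s u₁ u₂ u₃ u₄ = i_k(s,u₁,u₂,u₃,u₄)` : the number of `V_k`-shapes with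
`s` arcs and `uᵢ` `Cᵢ`-elements for `i = 1,2,3,4`. -/
def icount5 (k s u₁ u₂ u₃ u₄ : ℕ) : ℕ :=
  Nat.card {D : Diagram (2 * s) // D.IsShape k ∧ D.oneArcs = u₁ ∧
    D.twoArcCrossPairs = u₂ ∧ D.c3count = u₃ ∧ D.c4count = u₄}

/-- `S(h)` : the number of 3-noncrossing skeleton perfect matchings with `h` arcs,
with the convention `S(0) = S(1) = 1`. -/
def Scount (h : ℕ) : ℕ :=
  if h ≤ 1 then 1
  else Nat.card {D : Diagram (2 * h) // D.Noncrossing 3 ∧ D.Perfect ∧ D.IsSkeleton}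

/-- `S(y) = Σ_{h ≥ 0} S(h) y^h`. -/
def Sgf : PowerSeries ℚ := PowerSeries.mk fun h => (Scount h : ℚ)

/-- `Irr(h)` : the number of irreducible 3-noncrossing perfect matchings with `h` arcs. -/
def IrrCount (h : ℕ) : ℕ :=
  Nat.card {D : Diagram (2 * h) // D.Noncrossing 3 ∧ D.Perfect ∧ D.Irreducible}

/-- `S3^[4](n)` : the number of canonical 3-noncrossing skeleton diagrams on `n`
vertices. -/
def S34count (n : ℕ) : ℕ := Nat.card {D : Diagram n // D.CanonicalSkeleton}

/-- `A(n,h)` : the number of canonical 3-noncrossing skeleton diagrams on `n`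
vertices having exactly `h` arcs. -/
def Acount (n h : ℕ) : ℕ :=
  Nat.card {D : Diagram n // D.CanonicalSkeleton ∧ D.arcs.card = h}

/-- Substitution `f(g)` of a power series `g` with zero constant term into a
power series `f`, defined coefficientwise by (finite) sums. -/
def substPS (g f : PowerSeries ℚ) : PowerSeries ℚ :=
  PowerSeries.mk fun n => ∑ m ∈ Finset.range (n + 1),
    (PowerSeries.coeff m f) * (PowerSeries.coeff n (g ^ m))

/-- Substitution `f(g)` of a multivariate power series `g` with zero constant term
into a univariate power series `f`, defined coefficientwise by (finite) sums. -/
def substMv {σ : Type*} (g : MvPowerSeries σ ℚ) (f : PowerSeries ℚ) :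
    MvPowerSeries σ ℚ :=
  fun d => ∑ m ∈ Finset.range ((∑ i ∈ d.support, d i) + 1),
    (PowerSeries.coeff m f) * (MvPowerSeries.coeff d (g ^ m))

end
noncomputable section
namespace IrrPf
open Diagram Finset

lemma crosses_symm {a b : ℕ × ℕ} (h : Crosses a b) : Crosses b a := by
  unfold Crosses at *; tauto

lemma crosses_not_self (a : ℕ × ℕ) : ¬ Crosses a a := by
  unfold Crosses; omega

lemma diagramExt {n : ℕ} {D E : Diagram n} (h : D.arcs = E.arcs) : D = E := by
  cases D; cases E; simp_all

instance finiteDiagram (n : ℕ) : Finite (Diagram n) := by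
  have : Function.Injective (fun D : Diagram n =>
      (⟨D.arcs, by
        simp only [Finset.mem_powerset]
        intro a ha
        have := D.valid a ha
        simp [Finset.mem_product, Finset.mem_Icc]
        omega⟩ :
      ((Finset.Icc 1 n ×ˢ Finset.Icc 1 n).powerset : Finset (Finset (ℕ × ℕ))))) := by
    intro D E h
    exact diagramExt (congrArg Subtype.val h)
  exact Finite.of_injective _ this

instance (n : ℕ) (P : Diagram n → Prop) : Finite {D : Diagram n // P D} :=
  Subtype.finite

/-- unique arc at a vertex -/
lemma arc_at_unique {n : ℕ} (D : Diagram n) {v : ℕ} {a b : ℕ × ℕ}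
    (ha : a ∈ D.arcs) (hb : b ∈ D.arcs)
    (hva : v = a.1 ∨ v = a.2) (hvb : v = b.1 ∨ v = b.2) : a = b := by
  by_contra hne
  have := D.disj a ha b hb hne
  omega

lemma arc_at_one {n : ℕ} (D : Diagram n) {a : ℕ × ℕ} (ha : a ∈ D.arcs)
    (h1 : 1 = a.1 ∨ 1 = a.2) : a.1 = 1 := by
  have := D.valid a ha; omega

lemma arc_at_top {n : ℕ} (D : Diagram n) {a : ℕ × ℕ} (ha : a ∈ D.arcs)
    (h1 : n = a.1 ∨ n = a.2) : a.2 = n := by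
  have := D.valid a ha; omega

lemma two_mul_card (A : Finset (ℕ × ℕ))
    (h1 : ∀ a ∈ A, a.1 ≠ a.2)
    (h2 : ∀ a ∈ A, ∀ b ∈ A, a ≠ b → a.1 ≠ b.1 ∧ a.1 ≠ b.2 ∧ a.2 ≠ b.1 ∧ a.2 ≠ b.2) :
    (A.biUnion fun a => {a.1, a.2}).card = 2 * A.card := by
  rw [Finset.card_biUnion]
  · rw [Finset.sum_congr rfl (fun a ha => ?_), Finset.sum_const, smul_eq_mul, mul_comm]
    exact Finset.card_pair (h1 a ha)
  · intro a ha b hb hne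
    have := h2 a ha b hb hne
    simp only [Finset.disjoint_left, Finset.mem_insert, Finset.mem_singleton]
    omega

/-- a diagram that is a perfect matching has `n = 2 * #arcs`. -/
lemma perfect_two_mul {n : ℕ} (D : Diagram n) (hP : D.Perfect) :
    n = 2 * D.arcs.card := by
  have hset : Finset.Icc 1 n = D.arcs.biUnion fun a => {a.1, a.2} := by
    ext x
    simp only [Finset.mem_Icc, Finset.mem_biUnion, Finset.mem_insert, Finset.mem_singleton]
    constructor
    · rintro ⟨hx1, hx2⟩
      obtain ⟨a, ha, hv⟩ := hP x hx1 hx2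
      exact ⟨a, ha, by omega⟩
    · rintro ⟨a, ha, hv⟩
      have := D.valid a ha; omega
  have := two_mul_card D.arcs (fun a ha => by have := D.valid a ha; omega) D.disj
  rw [← hset] at this
  simpa using this

end IrrPf
end
noncomputable section
namespace IrrPf
open Diagram Finset

section Pos
variable (h : ℕ) (l : Fin (2 * h - 1) → ℕ)

/-- extension of `l` to ℕ by zero -/
def lf : ℕ → ℕ := fun i => if hi : i < 2 * h - 1 then l ⟨i, hi⟩ else 0

/-- position of the `v`-th core vertex after inserting gaps -/
def pos (v : ℕ) : ℕ := v + 2 * ∑ i ∈ Finset.range (v - 1), lf h l i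

lemma pos_zero : pos h l 0 = 0 := by simp [pos]

lemma pos_one : pos h l 1 = 1 := by simp [pos]

lemma pos_succ (v : ℕ) (hv : 1 ≤ v) :
    pos h l (v + 1) = pos h l v + 1 + 2 * lf h l (v - 1) := by
  unfold pos
  have : v + 1 - 1 = (v - 1) + 1 := by omega
  rw [this, Finset.sum_range_succ]
  ring

lemma pos_strictMono : StrictMono (pos h l) := by
  apply strictMono_nat_of_lt_succ
  intro v
  rcases Nat.eq_zero_or_pos v with rfl | hv
  · simp [pos_zero, pos_one]
  · rw [pos_succ h l v hv]; omega

lemma pos_le_iff {v w : ℕ} : pos h l v ≤ pos h l w ↔ v ≤ w :=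
  (pos_strictMono h l).le_iff_le

lemma pos_lt_iff {v w : ℕ} : pos h l v < pos h l w ↔ v < w :=
  (pos_strictMono h l).lt_iff_lt

lemma pos_inj {v w : ℕ} (hvw : pos h l v = pos h l w) : v = w :=
  (pos_strictMono h l).injective hvw

lemma le_pos (v : ℕ) : v ≤ pos h l v := (pos_strictMono h l).le_apply

lemma sum_lf : ∑ i ∈ Finset.range (2 * h - 1), lf h l i = ∑ i, l i := by
  rw [← Fin.sum_univ_eq_sum_range]
  exact Finset.sum_congr rfl (fun i _ => by simp [lf])

lemma pos_top (hh : 1 ≤ h) : pos h l (2 * h) = 2 * h + 2 * ∑ i, l i := by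
  unfold pos
  exact congrArg (fun t => 2 * h + 2 * t) (sum_lf h l)

lemma lf_eq (i : Fin (2 * h - 1)) : lf h l i = l i := by
  simp [lf]

lemma pos_gap (i : Fin (2 * h - 1)) :
    pos h l ((i : ℕ) + 2) = pos h l ((i : ℕ) + 1) + 1 + 2 * l i := by
  have := pos_succ h l ((i : ℕ) + 1) (by omega)
  simp only [Nat.add_sub_cancel] at this
  rw [this]
  congr 1
  exact congrArg (2 * ·) (lf_eq h l i)

/-- location trichotomy for vertices of the assembled diagram -/
lemma locate (hh : 1 ≤ h) {x : ℕ} (hx1 : 1 ≤ x) (hx2 : x ≤ pos h l (2 * h)) :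
    (∃ v, 1 ≤ v ∧ v ≤ 2 * h ∧ x = pos h l v) ∨
    (∃ i : Fin (2 * h - 1), ∃ o, 1 ≤ o ∧ o ≤ 2 * l i ∧ x = pos h l ((i : ℕ) + 1) + o) := by
  have hP1 : pos h l 1 ≤ x := by simpa [pos_one] using hx1
  obtain ⟨v, hv1, hvle, hvP, hmax⟩ :
      ∃ v, 1 ≤ v ∧ v ≤ 2 * h ∧ pos h l v ≤ x ∧ (v < 2 * h → x < pos h l (v + 1)) := by
    refine ⟨Nat.findGreatest (fun v => pos h l v ≤ x) (2 * h),
      Nat.le_findGreatest (P := fun v => pos h l v ≤ x) (by omega) hP1,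
      Nat.findGreatest_le _,
      Nat.findGreatest_spec (P := fun v => pos h l v ≤ x) (m := 1) (by omega) hP1, ?_⟩
    intro hlt
    have := Nat.findGreatest_is_greatest (P := fun v => pos h l v ≤ x)
      (Nat.lt_succ_self (Nat.findGreatest (fun v => pos h l v ≤ x) (2 * h)))
      (by omega : Nat.findGreatest (fun v => pos h l v ≤ x) (2 * h) + 1 ≤ 2 * h)
    simpa [not_le] using this
  rcases eq_or_lt_of_le hvP with heq | hlt
  · exact Or.inl ⟨v, hv1, hvle, heq.symm⟩
  · have hvne : v ≠ 2 * h := by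
      intro heq
      rw [heq] at hlt
      omega
    have hnext' : x < pos h l v + 1 + 2 * lf h l (v - 1) := by
      rw [← pos_succ h l v hv1]
      exact hmax (by omega)
    have hix : v - 1 < 2 * h - 1 := by omega
    have hlf : lf h l (v - 1) = l ⟨v - 1, hix⟩ := by
      simp only [lf]; rw [dif_pos hix]
    refine Or.inr ⟨⟨v - 1, hix⟩, x - pos h l v, by omega, by omega, ?_⟩
    simp only [Fin.val_mk]
    rw [show v - 1 + 1 = v by omega]
    omega

lemma core_ne_gap {v : ℕ} (hv1 : 1 ≤ v) (hv2 : v ≤ 2 * h) (i : Fin (2 * h - 1))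
    {o : ℕ} (ho1 : 1 ≤ o) (ho2 : o ≤ 2 * l i) :
    pos h l v ≠ pos h l ((i : ℕ) + 1) + o := by
  intro heq
  have hg := pos_gap h l i
  have h1 : pos h l ((i : ℕ) + 1) < pos h l v := by omega
  have h2 : pos h l v < pos h l ((i : ℕ) + 2) := by omega
  rw [pos_lt_iff] at h1 h2
  omega

lemma gap_ne_gap {i j : Fin (2 * h - 1)} (hij : i ≠ j) {o o' : ℕ}
    (ho1 : 1 ≤ o) (ho2 : o ≤ 2 * l i) (ho1' : 1 ≤ o') (ho2' : o' ≤ 2 * l j) :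
    pos h l ((i : ℕ) + 1) + o ≠ pos h l ((j : ℕ) + 1) + o' := by
  have key : ∀ i j : Fin (2 * h - 1), (i : ℕ) < (j : ℕ) → ∀ o o' : ℕ, 1 ≤ o → o ≤ 2 * l i →
      pos h l ((i : ℕ) + 1) + o ≠ pos h l ((j : ℕ) + 1) + o' := by
    intro i j hij o o' ho1 ho2 heq
    have hg := pos_gap h l i
    have : pos h l ((i : ℕ) + 2) ≤ pos h l ((j : ℕ) + 1) :=
      (pos_le_iff h l).mpr (by omega)
    omega
  rcases lt_or_gt_of_ne (fun hval => hij (Fin.ext hval)) with hlt | hgt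
  · exact key i j hlt o o' ho1 ho2
  · exact fun heq => key j i hgt o' o ho1' ho2' heq.symm

end Pos
end IrrPf
end
noncomputable section
namespace IrrPf
open Diagram Finset

lemma crosses_ne {a b : ℕ × ℕ} (h : Crosses a b) : a ≠ b := by
  rintro rfl; exact crosses_not_self a h

/-- crossing relation restricted to an arc set -/
def rel' (A : Finset (ℕ × ℕ)) : (ℕ × ℕ) → (ℕ × ℕ) → Prop :=
  fun x y => x ∈ A ∧ y ∈ A ∧ Crosses x y

lemma rel'_symm (A : Finset (ℕ × ℕ)) : Symmetric (rel' A) :=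
  fun _ _ h => ⟨h.2.1, h.1, crosses_symm h.2.2⟩

lemma rtg_rel'_symm {A : Finset (ℕ × ℕ)} {a b : ℕ × ℕ}
    (h : Relation.ReflTransGen (rel' A) a b) :
    Relation.ReflTransGen (rel' A) b a :=
  by haveI : Std.Symm (rel' A) := ⟨fun _ _ h' => rel'_symm A h'⟩; exact Std.Symm.symm _ _ h

/-- crossing-connectivity of a diagram -/
def CCon {n : ℕ} (D : Diagram n) : Prop :=
  ∀ a ∈ D.arcs, ∀ b ∈ D.arcs, Relation.ReflTransGen (rel' D.arcs) a b

lemma walk_rtg {n : ℕ} {D : Diagram n} {u v : {x : ℕ × ℕ // x ∈ D.arcs}}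
    (w : D.depGraph.Walk u v) :
    Relation.ReflTransGen (rel' D.arcs) u.1 v.1 := by
  induction w with
  | nil => exact Relation.ReflTransGen.refl
  | @cons a b c hadj _ ih =>
    rw [Diagram.depGraph, SimpleGraph.fromRel_adj] at hadj
    obtain ⟨hne, hcr | hcr⟩ := hadj
    · exact Relation.ReflTransGen.head ⟨a.2, b.2, hcr⟩ ih
    · exact Relation.ReflTransGen.head ⟨a.2, b.2, crosses_symm hcr⟩ ih

lemma ccon_of_skeleton {n : ℕ} {D : Diagram n} (hs : D.IsSkeleton) : CCon D := by
  intro a ha b hb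
  obtain ⟨w⟩ := hs.2.preconnected ⟨a, ha⟩ ⟨b, hb⟩
  exact walk_rtg w

lemma skeleton_of_ccon {n : ℕ} {D : Diagram n} (hcon : CCon D)
    (hcard : 2 ≤ D.arcs.card) : D.IsSkeleton := by
  constructor
  · intro a ha
    obtain ⟨b, hb, hba⟩ := Finset.exists_mem_ne (s := D.arcs) (by omega) a
    rcases (hcon a ha b hb).cases_head with heq | ⟨c, hc, _⟩
    · exact absurd heq.symm hba
    · exact ⟨c, hc.2.1, hc.2.2⟩
  · have hne : D.arcs.Nonempty := Finset.card_pos.mp (by omega)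
    obtain ⟨a0, ha0⟩ := hne
    have key : ∀ x y : ℕ × ℕ, Relation.ReflTransGen (rel' D.arcs) x y →
        ∀ (hx : x ∈ D.arcs) (hy : y ∈ D.arcs),
        D.depGraph.Reachable ⟨x, hx⟩ ⟨y, hy⟩ := by
      intro x y hxy
      induction hxy with
      | refl => intro hx hy; rfl
      | tail _ hrel ih =>
        intro hx hy
        refine (ih hx hrel.1).trans (SimpleGraph.Adj.reachable ?_)
        rw [Diagram.depGraph, SimpleGraph.fromRel_adj]
        exact ⟨fun hEq => crosses_ne hrel.2.2 (congrArg Subtype.val hEq), Or.inl hrel.2.2⟩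
    rw [SimpleGraph.connected_iff]
    refine ⟨?_, ⟨⟨a0, ha0⟩⟩⟩
    rintro ⟨x, hx⟩ ⟨y, hy⟩
    exact key x y (hcon x hx y hy) hx hy

/-- pull back a crossing family along an order-reflecting map -/
lemma hasCrossing_pullback {k n : ℕ} (D : Diagram n) (φ : ℕ → ℕ) (P : ℕ → Prop)
    (hm : ∀ x y, P x → P y → (x < y ↔ φ x < φ y)) (b : Fin k → ℕ × ℕ)
    (hmem : ∀ t, b t ∈ D.arcs) (hPb : ∀ t, P (b t).1 ∧ P (b t).2)
    (h2 : ∀ s t : Fin k, s < t → φ (b s).1 < φ (b t).1)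
    (h3 : ∀ s t : Fin k, s < t → φ (b s).2 < φ (b t).2)
    (h4 : ∀ s t : Fin k, φ (b s).1 < φ (b t).2) : D.HasCrossing k :=
  ⟨b, hmem, fun s t hst => (hm _ _ (hPb s).1 (hPb t).1).mpr (h2 s t hst),
    fun s t hst => (hm _ _ (hPb s).2 (hPb t).2).mpr (h3 s t hst),
    fun s t => (hm _ _ (hPb s).1 (hPb t).2).mpr (h4 s t)⟩

lemma crosses_map {φ : ℕ → ℕ} {P : ℕ → Prop}
    (hm : ∀ x y, P x → P y → (x < y ↔ φ x < φ y)) {a b : ℕ × ℕ}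
    (hPa : P a.1 ∧ P a.2) (hPb : P b.1 ∧ P b.2) :
    Crosses (φ a.1, φ a.2) (φ b.1, φ b.2) ↔ Crosses a b := by
  unfold Crosses
  simp only
  rw [← hm _ _ hPa.1 hPb.1, ← hm _ _ hPb.1 hPa.2, ← hm _ _ hPa.2 hPb.2,
    ← hm _ _ hPb.1 hPa.1, ← hm _ _ hPa.1 hPb.2, ← hm _ _ hPb.2 hPa.2]

lemma rtg_map {A B : Finset (ℕ × ℕ)} {φ : ℕ → ℕ} {P : ℕ → Prop}
    (hm : ∀ x y, P x → P y → (x < y ↔ φ x < φ y))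
    (hPA : ∀ a ∈ A, P a.1 ∧ P a.2)
    (him : ∀ a ∈ A, (φ a.1, φ a.2) ∈ B) {a b : ℕ × ℕ}
    (hr : Relation.ReflTransGen (rel' A) a b) :
    Relation.ReflTransGen (rel' B) (φ a.1, φ a.2) (φ b.1, φ b.2) := by
  induction hr with
  | refl => exact Relation.ReflTransGen.refl
  | tail _ hrel ih =>
    exact ih.tail ⟨him _ hrel.1, him _ hrel.2.1,
      (crosses_map hm (hPA _ hrel.1) (hPA _ hrel.2.1)).mpr hrel.2.2⟩

end IrrPf
end
noncomputable section
namespace IrrPf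
open Diagram Finset

section Asm
variable (h : ℕ) (l : Fin (2 * h - 1) → ℕ)

/-- embedding of core arcs -/
def cmap : ℕ × ℕ → ℕ × ℕ := fun a => (pos h l a.1, pos h l a.2)

/-- embedding of the `i`-th gap filling's arcs -/
def gmap (i : Fin (2 * h - 1)) : ℕ × ℕ → ℕ × ℕ :=
  fun a => (pos h l ((i : ℕ) + 1) + a.1, pos h l ((i : ℕ) + 1) + a.2)

variable (S : Diagram (2 * h)) (f : ∀ i : Fin (2 * h - 1), Diagram (2 * l i))

/-- the arcs of the assembled diagram -/
def asmArcs : Finset (ℕ × ℕ) :=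
  S.arcs.image (cmap h l) ∪
    Finset.univ.biUnion (fun i => (f i).arcs.image (gmap h l i))

lemma mem_asmArcs {b : ℕ × ℕ} :
    b ∈ asmArcs h l S f ↔
      (∃ a ∈ S.arcs, b = cmap h l a) ∨
      (∃ i, ∃ a ∈ (f i).arcs, b = gmap h l i a) := by
  simp only [asmArcs, Finset.mem_union, Finset.mem_image, Finset.mem_biUnion,
    Finset.mem_univ, true_and]
  constructor
  · rintro (⟨a, ha, rfl⟩ | ⟨i, a, ha, rfl⟩)
    · exact Or.inl ⟨a, ha, rfl⟩
    · exact Or.inr ⟨i, a, ha, rfl⟩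
  · rintro (⟨a, ha, rfl⟩ | ⟨i, a, ha, rfl⟩)
    · exact Or.inl ⟨a, ha, rfl⟩
    · exact Or.inr ⟨i, a, ha, rfl⟩

lemma no_cross_core_gap {v1 v2 : ℕ} (hv1 : 1 ≤ v1) (hv2 : v2 ≤ 2 * h)
    (i : Fin (2 * h - 1)) {o1 o2 : ℕ} (ho1 : 1 ≤ o1) (ho2 : o2 ≤ 2 * l i) :
    ¬ Crosses (pos h l v1, pos h l v2)
      (pos h l ((i : ℕ) + 1) + o1, pos h l ((i : ℕ) + 1) + o2) := by
  have hg := pos_gap h l i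
  rintro (⟨h1, h2, h3⟩ | ⟨h1, h2, h3⟩)
  · have e1 : pos h l ((i : ℕ) + 1) < pos h l v2 := by omega
    have e2 : pos h l v2 < pos h l ((i : ℕ) + 2) := by omega
    rw [pos_lt_iff] at e1 e2
    omega
  · have e1 : pos h l ((i : ℕ) + 1) < pos h l v1 := by omega
    have e2 : pos h l v1 < pos h l ((i : ℕ) + 2) := by omega
    rw [pos_lt_iff] at e1 e2
    omega

lemma no_cross_gap_gap {i j : Fin (2 * h - 1)} (hij : i ≠ j) {o1 o2 o1' o2' : ℕ}
    (h1 : o2 ≤ 2 * l i) (h2 : o2' ≤ 2 * l j) (h3 : 1 ≤ o1) (h4 : 1 ≤ o1') :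
    ¬ Crosses (pos h l ((i : ℕ) + 1) + o1, pos h l ((i : ℕ) + 1) + o2)
      (pos h l ((j : ℕ) + 1) + o1', pos h l ((j : ℕ) + 1) + o2') := by
  have key : ∀ i j : Fin (2 * h - 1), (i : ℕ) < (j : ℕ) → ∀ o1 o2 o1' o2' : ℕ,
      o2 ≤ 2 * l i → 1 ≤ o1' →
      ¬ Crosses (pos h l ((i : ℕ) + 1) + o1, pos h l ((i : ℕ) + 1) + o2)
        (pos h l ((j : ℕ) + 1) + o1', pos h l ((j : ℕ) + 1) + o2') := by
    intro i j hij o1 o2 o1' o2' ho2 ho1' hc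
    have hg := pos_gap h l i
    have hle : pos h l ((i : ℕ) + 2) ≤ pos h l ((j : ℕ) + 1) :=
      (pos_le_iff h l).mpr (by omega)
    rcases hc with ⟨c1, c2, c3⟩ | ⟨c1, c2, c3⟩ <;> omega
  rcases lt_or_gt_of_ne (fun hval => hij (Fin.ext hval)) with hlt | hgt
  · exact key i j hlt o1 o2 o1' o2' h1 h4
  · exact fun hc => key j i hgt o1' o2' o1 o2 h2 h3 (crosses_symm hc)

lemma asm_valid : ∀ a ∈ asmArcs h l S f,
    1 ≤ a.1 ∧ a.1 < a.2 ∧ a.2 ≤ pos h l (2 * h) := by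
  intro b hb
  rcases (mem_asmArcs h l S f).mp hb with ⟨a, ha, rfl⟩ | ⟨i, a, ha, rfl⟩
  · obtain ⟨ha1, ha2, ha3⟩ := S.valid a ha
    refine ⟨le_trans ha1 (le_pos h l a.1), (pos_lt_iff h l).mpr ha2,
      (pos_le_iff h l).mpr ha3⟩
  · obtain ⟨ha1, ha2, ha3⟩ := (f i).valid a ha
    have hg := pos_gap h l i
    have hle : pos h l ((i : ℕ) + 2) ≤ pos h l (2 * h) :=
      (pos_le_iff h l).mpr (by omega)
    exact ⟨by simp [gmap]; omega, by simp [gmap]; omega, by simp [gmap]; omega⟩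

lemma asm_disj : ∀ a ∈ asmArcs h l S f, ∀ b ∈ asmArcs h l S f, a ≠ b →
    a.1 ≠ b.1 ∧ a.1 ≠ b.2 ∧ a.2 ≠ b.1 ∧ a.2 ≠ b.2 := by
  intro b hb b' hb' hne
  rcases (mem_asmArcs h l S f).mp hb with ⟨a, ha, rfl⟩ | ⟨i, a, ha, rfl⟩ <;>
    rcases (mem_asmArcs h l S f).mp hb' with ⟨a', ha', rfl⟩ | ⟨i', a', ha', rfl⟩
  · have hane : a ≠ a' := fun hEq => hne (by rw [hEq])
    have := S.disj a ha a' ha' hane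
    refine ⟨?_, ?_, ?_, ?_⟩ <;> simp only [cmap] <;>
      exact fun hEq => by have := pos_inj h l hEq; omega
  · obtain ⟨ha1, ha2, ha3⟩ := S.valid a ha
    obtain ⟨hb1, hb2, hb3⟩ := (f i').valid a' ha'
    refine ⟨?_, ?_, ?_, ?_⟩ <;> simp only [cmap, gmap] <;>
      first
      | exact core_ne_gap h l (by omega) (by omega) i' (by omega) (by omega)
      | exact core_ne_gap h l (by omega) (by omega) i' (by omega) (by omega)
  · obtain ⟨ha1, ha2, ha3⟩ := (f i).valid a ha
    obtain ⟨hb1, hb2, hb3⟩ := S.valid a' ha'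
    refine ⟨?_, ?_, ?_, ?_⟩ <;> simp only [cmap, gmap] <;>
      exact fun hEq =>
        core_ne_gap h l (by omega) (by omega) i (by omega) (by omega) hEq.symm
  · rcases eq_or_ne i i' with rfl | hii
    · have hane : a ≠ a' := fun hEq => hne (by rw [hEq])
      have := (f i).disj a ha a' ha' hane
      refine ⟨?_, ?_, ?_, ?_⟩ <;> simp only [gmap] <;> omega
    · obtain ⟨ha1, ha2, ha3⟩ := (f i).valid a ha
      obtain ⟨hb1, hb2, hb3⟩ := (f i').valid a' ha'
      refine ⟨?_, ?_, ?_, ?_⟩ <;> simp only [gmap] <;>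
        exact gap_ne_gap h l hii (by omega) (by omega) (by omega) (by omega)

/-- the assembled diagram -/
def asm : Diagram (pos h l (2 * h)) :=
  ⟨asmArcs h l S f, asm_valid h l S f, asm_disj h l S f⟩

lemma asm_arcs : (asm h l S f).arcs = asmArcs h l S f := rfl

lemma asm_perfect (hh : 1 ≤ h) (hS : S.Perfect) (hf : ∀ i, (f i).Perfect) :
    (asm h l S f).Perfect := by
  intro x hx1 hx2
  rcases locate h l hh hx1 hx2 with ⟨v, hv1, hv2, rfl⟩ | ⟨i, o, ho1, ho2, rfl⟩
  · obtain ⟨a, ha, hva⟩ := hS v hv1 hv2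
    refine ⟨cmap h l a, (mem_asmArcs h l S f).mpr (Or.inl ⟨a, ha, rfl⟩), ?_⟩
    rcases hva with rfl | rfl
    · exact Or.inl rfl
    · exact Or.inr rfl
  · obtain ⟨a, ha, hva⟩ := hf i o ho1 ho2
    refine ⟨gmap h l i a, (mem_asmArcs h l S f).mpr (Or.inr ⟨i, a, ha, rfl⟩), ?_⟩
    rcases hva with rfl | rfl
    · exact Or.inl rfl
    · exact Or.inr rfl

lemma asm_noncrossing (hS : S.Noncrossing 3) (hf : ∀ i, (f i).Noncrossing 3) :
    (asm h l S f).Noncrossing 3 := by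
  rintro ⟨a, hmem, hc2, hc3, hc4⟩
  have hpair : ∀ s t : Fin 3, s < t → Crosses (a s) (a t) :=
    fun s t hst => Or.inl ⟨hc2 s t hst, hc4 t s, hc3 s t hst⟩
  have hcls : ∀ t, (∃ b ∈ S.arcs, a t = cmap h l b) ∨
      (∃ i, ∃ b ∈ (f i).arcs, a t = gmap h l i b) :=
    fun t => (mem_asmArcs h l S f).mp (hmem t)
  -- a crossing between a core image and a gap image is impossible
  have hnc : ∀ s t : Fin 3, Crosses (a s) (a t) →
      (∃ b ∈ S.arcs, a s = cmap h l b) →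
      (∃ i, ∃ b ∈ (f i).arcs, a t = gmap h l i b) → False := by
    rintro s t hcr ⟨b, hb, hbs⟩ ⟨i, b', hb', hbt⟩
    obtain ⟨h1, h2, h3⟩ := S.valid b hb
    obtain ⟨h1', h2', h3'⟩ := (f i).valid b' hb'
    rw [hbs, hbt] at hcr
    exact no_cross_core_gap h l (by omega) (by omega) i (by omega) (by omega) hcr
  -- gap images in different gaps cannot cross
  have hng : ∀ s t : Fin 3, Crosses (a s) (a t) →
      ∀ i i', (∃ b ∈ (f i).arcs, a s = gmap h l i b) →
      (∃ b ∈ (f i').arcs, a t = gmap h l i' b) → i = i' := by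
    rintro s t hcr i i' ⟨b, hb, hbs⟩ ⟨b', hb', hbt⟩
    by_contra hii
    obtain ⟨h1, h2, h3⟩ := (f i).valid b hb
    obtain ⟨h1', h2', h3'⟩ := (f i').valid b' hb'
    rw [hbs, hbt] at hcr
    exact no_cross_gap_gap h l hii (by omega) (by omega) (by omega) (by omega) hcr
  rcases hcls 0 with ⟨b0, hb0, he0⟩ | ⟨i0, b0, hb0, he0⟩
  · -- all three are core images
    have hall : ∀ t, ∃ b ∈ S.arcs, a t = cmap h l b := by
      intro t
      rcases hcls t with hcore | hgap
      · exact hcore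
      exfalso
      obtain ⟨i, b, hb, hbt⟩ := hgap
      rcases eq_or_ne 0 t with heq0 | ht0
      · obtain ⟨h1, h2, h3⟩ := S.valid b0 hb0
        obtain ⟨h1', h2', h3'⟩ := (f i).valid b hb
        have hfst := congrArg Prod.fst ((he0.symm.trans (heq0 ▸ hbt : a 0 = gmap h l i b)))
        exact core_ne_gap h l (by omega) (by omega) i (by omega) (by omega) hfst
      · have hpos : (0 : Fin 3) < t := Fin.pos_of_ne_zero (Ne.symm ht0)
        exact hnc 0 t (hpair 0 t hpos) ⟨b0, hb0, he0⟩ ⟨i, b, hb, hbt⟩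
    choose b hbmem hbeq using hall
    refine hS (hasCrossing_pullback S (pos h l) (fun _ => True)
      (fun x y _ _ => (pos_lt_iff h l).symm) b hbmem (fun t => ⟨trivial, trivial⟩)
      ?_ ?_ ?_)
    · intro s t hst
      have := hc2 s t hst
      rw [hbeq s, hbeq t] at this
      exact this
    · intro s t hst
      have := hc3 s t hst
      rw [hbeq s, hbeq t] at this
      exact this
    · intro s t
      have := hc4 s t
      rw [hbeq s, hbeq t] at this
      exact this
  · -- all three are gap images in gap i0
    have hall : ∀ t, ∃ b ∈ (f i0).arcs, a t = gmap h l i0 b := by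
      intro t
      rcases eq_or_ne t 0 with rfl | ht0
      · exact ⟨b0, hb0, he0⟩
      have hpos : (0 : Fin 3) < t := Fin.pos_of_ne_zero ht0
      rcases hcls t with ⟨b', hb', hbt'⟩ | ⟨i, b, hb, hbt⟩
      · exact absurd (hnc t 0 (crosses_symm (hpair 0 t hpos)) ⟨b', hb', hbt'⟩
          ⟨i0, b0, hb0, he0⟩) not_false
      · have := hng 0 t (hpair 0 t hpos) i0 i ⟨b0, hb0, he0⟩ ⟨b, hb, hbt⟩
        exact this ▸ ⟨b, hb, hbt⟩
    choose b hbmem hbeq using hall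
    refine hf i0 (hasCrossing_pullback (f i0) (fun x => pos h l ((i0 : ℕ) + 1) + x)
      (fun _ => True) (fun x y _ _ => by
        show x < y ↔ pos h l ((i0 : ℕ) + 1) + x < pos h l ((i0 : ℕ) + 1) + y
        omega) b hbmem (fun t => ⟨trivial, trivial⟩)
      ?_ ?_ ?_)
    · intro s t hst
      have := hc2 s t hst
      rw [hbeq s, hbeq t] at this
      exact this
    · intro s t hst
      have := hc3 s t hst
      rw [hbeq s, hbeq t] at this
      exact this
    · intro s t
      have := hc4 s t
      rw [hbeq s, hbeq t] at this
      exact this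

end Asm
end IrrPf
end
noncomputable section
namespace IrrPf
open Diagram Finset

section Asm2
variable (h : ℕ) (l : Fin (2 * h - 1) → ℕ) (S : Diagram (2 * h))
  (f : ∀ i : Fin (2 * h - 1), Diagram (2 * l i))

lemma asm_irreducible (hh : 1 ≤ h) (hS : S.Perfect) (hcon : CCon S) :
    (asm h l S f).Irreducible := by
  rintro ⟨ℓ, ⟨w1, hw1, hw1'⟩, ⟨w2, hw2, hw2'⟩, hsplit⟩
  have hstep : ∀ c d, rel' S.arcs c d → (pos h l c.2 < ℓ ↔ pos h l d.2 < ℓ) := by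
    rintro c d ⟨hc, hd, hcr⟩
    have hsc := hsplit (cmap h l c)
      ((mem_asmArcs h l S f).mpr (Or.inl ⟨c, hc, rfl⟩))
    have hsd := hsplit (cmap h l d)
      ((mem_asmArcs h l S f).mpr (Or.inl ⟨d, hd, rfl⟩))
    simp only [cmap] at hsc hsd
    have h1 : d.1 < c.2 := by rcases hcr with ⟨x1, x2, x3⟩ | ⟨x1, x2, x3⟩ <;> omega
    have h2 : c.1 < d.2 := by rcases hcr with ⟨x1, x2, x3⟩ | ⟨x1, x2, x3⟩ <;> omega
    constructor
    · intro hQc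
      by_contra hQd
      have hd1 : ℓ ≤ pos h l d.1 := by tauto
      have : pos h l c.2 < pos h l d.1 := by omega
      rw [pos_lt_iff] at this
      omega
    · intro hQd
      by_contra hQc
      have hc1 : ℓ ≤ pos h l c.1 := by tauto
      have : pos h l d.2 < pos h l c.1 := by omega
      rw [pos_lt_iff] at this
      omega
  have hinv : ∀ c d, Relation.ReflTransGen (rel' S.arcs) c d →
      (pos h l c.2 < ℓ ↔ pos h l d.2 < ℓ) := by
    intro c d hr
    induction hr with
    | refl => exact Iff.rfl
    | tail _ hrel ih => exact ih.trans (hstep _ _ hrel)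
  obtain ⟨c1, hc1, hv1⟩ := hS 1 le_rfl (by omega)
  have hc11 : c1.1 = 1 := arc_at_one S hc1 hv1
  obtain ⟨c2, hc2m, hv2⟩ := hS (2 * h) (by omega) le_rfl
  have hc22 : c2.2 = 2 * h := arc_at_top S hc2m hv2
  have hiff := hinv c1 c2 (hcon c1 hc1 c2 hc2m)
  have hs1 := hsplit (cmap h l c1)
    ((mem_asmArcs h l S f).mpr (Or.inl ⟨c1, hc1, rfl⟩))
  simp only [cmap] at hs1
  rcases hs1 with hA | hB
  · have htop : pos h l c2.2 < ℓ := hiff.mp hA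
    rw [hc22] at htop
    have hv := asm_valid h l S f w2 hw2
    omega
  · rw [hc11, pos_one] at hB
    have hv := asm_valid h l S f w1 hw1
    omega

lemma asm_component (hS : S.Perfect) (hcon : CCon S) {c0 : ℕ × ℕ}
    (hc0 : c0 ∈ S.arcs) {b : ℕ × ℕ} (hb : b ∈ asmArcs h l S f) :
    Relation.ReflTransGen (rel' (asmArcs h l S f)) (cmap h l c0) b ↔
      ∃ a ∈ S.arcs, b = cmap h l a := by
  constructor
  · intro hr
    clear hb
    induction hr with
    | refl => exact ⟨c0, hc0, rfl⟩
    | tail _ hrel ih =>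
      obtain ⟨a, ha, rfl⟩ := ih
      obtain ⟨_, hdmem, hcr⟩ := hrel
      rcases (mem_asmArcs h l S f).mp hdmem with ⟨a', ha', rfl⟩ | ⟨i, a', ha', rfl⟩
      · exact ⟨a', ha', rfl⟩
      · exfalso
        obtain ⟨h1, h2, h3⟩ := S.valid a ha
        obtain ⟨h1', h2', h3'⟩ := (f i).valid a' ha'
        exact no_cross_core_gap h l (by omega) (by omega) i (by omega) (by omega) hcr
  · rintro ⟨a, ha, rfl⟩
    exact rtg_map (P := fun _ => True) (fun x y _ _ => (pos_lt_iff h l).symm)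
      (fun _ _ => ⟨trivial, trivial⟩)
      (fun a ha => (mem_asmArcs h l S f).mpr (Or.inl ⟨a, ha, rfl⟩))
      (hcon c0 hc0 a ha)

lemma asm_gap_iff (i : Fin (2 * h - 1)) {b : ℕ × ℕ} :
    (b ∈ asmArcs h l S f ∧ pos h l ((i : ℕ) + 1) < b.1 ∧ b.2 < pos h l ((i : ℕ) + 2)) ↔
      ∃ a ∈ (f i).arcs, b = gmap h l i a := by
  have hg := pos_gap h l i
  constructor
  · rintro ⟨hb, hlo, hhi⟩
    rcases (mem_asmArcs h l S f).mp hb with ⟨a, ha, rfl⟩ | ⟨j, a, ha, rfl⟩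
    · exfalso
      obtain ⟨h1, h2, h3⟩ := S.valid a ha
      simp only [cmap] at hlo hhi
      have e1 : (i : ℕ) + 1 < a.1 := by rw [← pos_lt_iff h l]; exact hlo
      have e2 : a.2 < (i : ℕ) + 2 := by rw [← pos_lt_iff h l]; exact hhi
      omega
    · rcases eq_or_ne j i with rfl | hji
      · exact ⟨a, ha, rfl⟩
      exfalso
      obtain ⟨h1, h2, h3⟩ := (f j).valid a ha
      simp only [gmap] at hlo hhi
      have hgj := pos_gap h l j
      rcases lt_or_gt_of_ne (fun hv => hji (Fin.ext hv)) with hlt | hgt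
      · -- j < i : b.1 < pos (j+2) ≤ pos (i+1) contradicts hlo
        have : pos h l ((j : ℕ) + 2) ≤ pos h l ((i : ℕ) + 1) :=
          (pos_le_iff h l).mpr (by omega)
        omega
      · -- i < j : b.2 > pos (j+1) ≥ pos (i+2) contradicts hhi
        have : pos h l ((i : ℕ) + 2) ≤ pos h l ((j : ℕ) + 1) :=
          (pos_le_iff h l).mpr (by omega)
        omega
  · rintro ⟨a, ha, rfl⟩
    obtain ⟨h1, h2, h3⟩ := (f i).valid a ha
    refine ⟨(mem_asmArcs h l S f).mpr (Or.inr ⟨i, a, ha, rfl⟩), ?_, ?_⟩ <;>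
      simp only [gmap] <;> omega

end Asm2
end IrrPf
end
noncomputable section
namespace IrrPf
open Diagram Finset

lemma rtg_mem {A : Finset (ℕ × ℕ)} {a b : ℕ × ℕ} (ha : a ∈ A)
    (h : Relation.ReflTransGen (rel' A) a b) : b ∈ A := by
  induction h with
  | refl => exact ha
  | tail _ hrel _ => exact hrel.2.1

section Decomp
variable {N : ℕ} (M : Diagram N) {a0 : ℕ × ℕ}

lemma not_inside (ha01 : a0.1 = 1) {b c : ℕ × ℕ} (hb : b ∈ M.arcs)
    (hnb : ¬ Relation.ReflTransGen (rel' M.arcs) a0 b)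
    (hc : Relation.ReflTransGen (rel' M.arcs) a0 c) :
    ¬ (b.1 < c.1 ∧ c.2 < b.2) := by
  induction hc with
  | refl => have := M.valid b hb; omega
  | @tail c d hprev hrel ih =>
    intro hin
    have hne : b ≠ c := fun h => hnb (h ▸ hprev)
    have hd := M.disj b hb c hrel.1 hne
    have hvb := M.valid b hb
    have hvc := M.valid c hrel.1
    have hvd := M.valid d hrel.2.1
    have hcd := hrel.2.2
    have hCbc : Crosses b c := by
      unfold Crosses at hcd ⊢
      omega
    exact hnb (hprev.tail ⟨hrel.1, hb, crosses_symm hCbc⟩)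

lemma outside (ha0 : a0 ∈ M.arcs) (ha01 : a0.1 = 1) {b c : ℕ × ℕ}
    (hb : b ∈ M.arcs) (hnb : ¬ Relation.ReflTransGen (rel' M.arcs) a0 b)
    (hc : Relation.ReflTransGen (rel' M.arcs) a0 c) :
    (c.1 < b.1 ∨ b.2 < c.1) ∧ (c.2 < b.1 ∨ b.2 < c.2) := by
  have hcA : c ∈ M.arcs := rtg_mem ha0 hc
  have hne : b ≠ c := fun h => hnb (h ▸ hc)
  have hd := M.disj b hb c hcA hne
  have hvb := M.valid b hb
  have hvc := M.valid c hcA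
  have hni := not_inside M ha01 hb hnb hc
  have hNC : ¬ Crosses b c := fun hx => hnb (hc.tail ⟨hcA, hb, crosses_symm hx⟩)
  unfold Crosses at hNC
  omega

/-- in an irreducible diagram, the arc at the last vertex belongs to the
component of the arc at vertex 1 -/
lemma top_in_C (ha0 : a0 ∈ M.arcs) (ha01 : a0.1 = 1) (hMI : M.Irreducible)
    {b : ℕ × ℕ} (hb : b ∈ M.arcs) (hbN : b.2 = N) :
    Relation.ReflTransGen (rel' M.arcs) a0 b := by
  by_contra hnb
  set V : Finset ℕ :=
    (M.arcs.filter fun c => Relation.ReflTransGen (rel' M.arcs) a0 c).biUnion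
      (fun a => {a.1, a.2}) with hV
  have hVmem : ∀ x ∈ V, ∃ c ∈ M.arcs,
      Relation.ReflTransGen (rel' M.arcs) a0 c ∧ (x = c.1 ∨ x = c.2) := by
    intro x hx
    simp only [hV, Finset.mem_biUnion, Finset.mem_filter, Finset.mem_insert,
      Finset.mem_singleton] at hx
    obtain ⟨c, ⟨hc1, hc2⟩, hc3⟩ := hx
    exact ⟨c, hc1, hc2, hc3⟩
  have hVne : V.Nonempty := by
    refine ⟨a0.1, ?_⟩
    simp only [hV, Finset.mem_biUnion, Finset.mem_filter]
    exact ⟨a0, ⟨ha0, Relation.ReflTransGen.refl⟩, by simp⟩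
  set v := V.max' hVne with hv
  have hvV : v ∈ V := V.max'_mem hVne
  have hvle : ∀ x ∈ V, x ≤ v := fun x hx => V.le_max' x hx
  -- every arc is entirely below `v+1` or entirely at/above `v+1`
  have hsplit : ∀ a ∈ M.arcs, a.2 < v + 1 ∨ v + 1 ≤ a.1 := by
    intro a ha
    by_cases haC : Relation.ReflTransGen (rel' M.arcs) a0 a
    · left
      have : a.2 ∈ V := by
        simp only [hV, Finset.mem_biUnion, Finset.mem_filter]
        exact ⟨a, ⟨ha, haC⟩, by simp⟩
      have := hvle _ this
      omega
    · -- a is not in the component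
      by_contra hcon
      push_neg at hcon
      obtain ⟨c, hcA, hcR, hcv⟩ := hVmem v hvV
      have hout := outside M ha0 ha01 ha haC hcR
      omega
  -- the arc at `N` would be in the second class, the arc at 1 in the first
  have hbv : v + 1 ≤ b.1 := by
    rcases hsplit b hb with h1 | h2
    · exfalso
      -- b.2 = N ≤ v would force N ∈ V, i.e. N endpoint of a component arc,
      -- but b is the unique arc at N
      obtain ⟨c, hcA, hcR, hcv⟩ := hVmem v hvV
      have hvN : v ≤ N := by
        have := M.valid c hcA
        omega
      have hNv : N ≤ v := by omega
      have hvisN : v = N := le_antisymm hvN hNv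
      have : b = c := arc_at_unique M hb hcA (Or.inr hbN.symm)
        (by rw [← hvisN]; tauto)
      exact hnb (this ▸ hcR)
    · exact h2
  refine hMI ⟨v + 1, ⟨a0, ha0, ?_⟩, ⟨b, hb, hbv⟩, hsplit⟩
  · have : a0.2 ∈ V := by
      simp only [hV, Finset.mem_biUnion, Finset.mem_filter]
      exact ⟨a0, ⟨ha0, Relation.ReflTransGen.refl⟩, by simp⟩
    have := hvle _ this
    omega

end Decomp
end IrrPf
end
noncomputable section
namespace IrrPf
open Diagram Finset

def castD {m m' : ℕ} (e : m = m') (D : Diagram m) : Diagram m' :=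
  ⟨D.arcs, by subst e; exact D.valid, D.disj⟩

lemma castD_arcs {m m' : ℕ} (e : m = m') (D : Diagram m) :
    (castD e D).arcs = D.arcs := rfl

lemma castD_noncrossing {m m' : ℕ} (e : m = m') (D : Diagram m) {k : ℕ}
    (hD : D.Noncrossing k) : (castD e D).Noncrossing k := by
  subst e; exact hD

lemma castD_perfect {m m' : ℕ} (e : m = m') (D : Diagram m)
    (hD : D.Perfect) : (castD e D).Perfect := by
  subst e; exact hD

lemma castD_irreducible {m m' : ℕ} (e : m = m') (D : Diagram m)
    (hD : D.Irreducible) : (castD e D).Irreducible := by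
  subst e; exact hD

/-- 3-noncrossing perfect matchings with `m` arcs -/
abbrev MTy (m : ℕ) := {D : Diagram (2 * m) // D.Noncrossing 3 ∧ D.Perfect}

/-- cores: for `h ≥ 2` skeleta, for `h ≤ 1` just perfect matchings -/
abbrev CoreTy (h : ℕ) :=
  {D : Diagram (2 * h) // D.Noncrossing 3 ∧ D.Perfect ∧ (2 ≤ h → D.IsSkeleton)}

/-- tuples of matchings with prescribed total size -/
abbrev FillTy (k m : ℕ) := {g : ∀ _ : Fin k, Σ m' : ℕ, MTy m' // (∑ i, (g i).1) = m}

abbrev SigTy (n : ℕ) :=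
  Σ h : {h : ℕ // h ∈ Finset.Icc 1 n}, CoreTy h.1 × FillTy (2 * h.1 - 1) (n - h.1)

abbrev IrrTy (n : ℕ) := {D : Diagram (2 * n) // D.Noncrossing 3 ∧ D.Perfect ∧ D.Irreducible}

lemma core_ccon {h : ℕ} (hh : 1 ≤ h) (D : Diagram (2 * h)) (hP : D.Perfect)
    (hsk : 2 ≤ h → D.IsSkeleton) : CCon D := by
  rcases lt_or_ge h 2 with h1 | h2
  · have hcard := perfect_two_mul D hP
    intro a ha b hb
    have hcc : D.arcs.card = 1 := by omega
    obtain ⟨c, hc⟩ := Finset.card_eq_one.mp hcc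
    rw [hc, Finset.mem_singleton] at ha hb
    rw [ha, hb]
  · exact ccon_of_skeleton (hsk h2)

/-- the construction map -/
def Phi {n : ℕ} : SigTy n → IrrTy n
  | ⟨⟨h, hmem⟩, ⟨S, hS⟩, ⟨g, hsum⟩⟩ =>
    have hh : 1 ≤ h := (Finset.mem_Icc.mp hmem).1
    have hhn : h ≤ n := (Finset.mem_Icc.mp hmem).2
    have ekey : pos h (fun i => (g i).1) (2 * h) = 2 * n := by
      rw [pos_top h _ hh, hsum]
      show 2 * h + 2 * (n - h) = 2 * n
      omega
    ⟨castD ekey (asm h (fun i => (g i).1) S (fun i => (g i).2.1)),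
      castD_noncrossing ekey _
        (asm_noncrossing h _ S _ hS.1 (fun i => (g i).2.2.1)),
      castD_perfect ekey _
        (asm_perfect h _ S _ hh hS.2.1 (fun i => (g i).2.2.2)),
      castD_irreducible ekey _
        (asm_irreducible h _ S _ hh hS.2.1 (core_ccon hh S hS.2.1 hS.2.2))⟩

end IrrPf
end
noncomputable section
namespace IrrPf
open Diagram Finset

lemma sigma_MTy_ext {a b : Σ m', MTy m'} (h1 : a.1 = b.1)
    (h2 : a.2.1.arcs = b.2.1.arcs) : a = b := by
  rcases a with ⟨m, D, hD⟩
  rcases b with ⟨m', D', hD'⟩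
  dsimp at h1
  subst h1
  exact congrArg (Sigma.mk m) (Subtype.ext (diagramExt h2))

lemma gmap_inj (h : ℕ) (l : Fin (2 * h - 1) → ℕ) (i : Fin (2 * h - 1)) :
    Function.Injective (gmap h l i) := by
  intro a b hab
  simp only [gmap, Prod.ext_iff] at hab ⊢
  omega

theorem Phi_inj {n : ℕ} : Function.Injective (Phi (n := n)) := by
  rintro ⟨⟨h, hm⟩, ⟨S, hS⟩, ⟨g, hg⟩⟩ ⟨⟨h', hm'⟩, ⟨S', hS'⟩, ⟨g', hg'⟩⟩ hEq
  have hh : 1 ≤ h := (Finset.mem_Icc.mp hm).1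
  have hh' : 1 ≤ h' := (Finset.mem_Icc.mp hm').1
  have hA : asmArcs h (fun i => (g i).1) S (fun i => (g i).2.1) =
      asmArcs h' (fun i => (g' i).1) S' (fun i => (g' i).2.1) :=
    congrArg (fun y : IrrTy n => (y.1).arcs) hEq
  set lx := fun i => (g i).1 with hlx
  set lx' := fun i => (g' i).1 with hlx'
  set fx := fun i => (g i).2.1 with hfx
  set fx' := fun i => (g' i).2.1 with hfx'
  have hccS : CCon S := core_ccon hh S hS.2.1 hS.2.2
  have hccS' : CCon S' := core_ccon hh' S' hS'.2.1 hS'.2.2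
  -- the unique arc at vertex 1
  obtain ⟨a1, ha1, hv1⟩ := hS.2.1 1 le_rfl (by show (1:ℕ) ≤ 2 * h; omega)
  have hc01 : a1.1 = 1 := arc_at_one S ha1 hv1
  obtain ⟨a1', ha1', hv1'⟩ := hS'.2.1 1 le_rfl (by show (1:ℕ) ≤ 2 * h'; omega)
  have hc01' : a1'.1 = 1 := arc_at_one S' ha1' hv1'
  have hmem1 : cmap h lx a1 ∈ asmArcs h lx S fx :=
    (mem_asmArcs h lx S fx).mpr (Or.inl ⟨a1, ha1, rfl⟩)
  have hmem1' : cmap h' lx' a1' ∈ asmArcs h lx S fx := by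
    rw [hA]
    exact (mem_asmArcs h' lx' S' fx').mpr (Or.inl ⟨a1', ha1', rfl⟩)
  have e1 : (cmap h lx a1).1 = 1 := by
    show pos h lx a1.1 = 1
    rw [hc01, pos_one]
  have e1' : (cmap h' lx' a1').1 = 1 := by
    show pos h' lx' a1'.1 = 1
    rw [hc01', pos_one]
  have hu : cmap h lx a1 = cmap h' lx' a1' :=
    arc_at_unique (asm h lx S fx) hmem1 hmem1' (Or.inl e1.symm) (Or.inl e1'.symm)
  -- component equality
  have hcomp : ∀ b ∈ asmArcs h lx S fx,
      ((∃ a ∈ S.arcs, b = cmap h lx a) ↔ (∃ a ∈ S'.arcs, b = cmap h' lx' a)) := by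
    intro b hb
    constructor
    · intro hx
      have hr := (asm_component h lx S fx hS.2.1 hccS ha1 hb).mpr hx
      rw [hA, hu] at hr
      exact (asm_component h' lx' S' fx' hS'.2.1 hccS' ha1' (hA ▸ hb)).mp hr
    · intro hx
      have hr := (asm_component h' lx' S' fx' hS'.2.1 hccS' ha1' (hA ▸ hb)).mpr hx
      rw [← hA, ← hu] at hr
      exact (asm_component h lx S fx hS.2.1 hccS ha1 hb).mp hr
  -- image equality of embedded cores
  have himg : S.arcs.image (cmap h lx) = S'.arcs.image (cmap h' lx') := by
    ext b
    simp only [Finset.mem_image]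
    constructor
    · rintro ⟨a, ha, rfl⟩
      have hbA : cmap h lx a ∈ asmArcs h lx S fx :=
        (mem_asmArcs h lx S fx).mpr (Or.inl ⟨a, ha, rfl⟩)
      obtain ⟨a', ha', he⟩ := (hcomp _ hbA).mp ⟨a, ha, rfl⟩
      exact ⟨a', ha', he.symm⟩
    · rintro ⟨a, ha, rfl⟩
      have hbA : cmap h' lx' a ∈ asmArcs h lx S fx := by
        rw [hA]
        exact (mem_asmArcs h' lx' S' fx').mpr (Or.inl ⟨a, ha, rfl⟩)
      obtain ⟨a', ha', he⟩ := (hcomp _ hbA).mpr ⟨a, ha, rfl⟩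
      exact ⟨a', ha', he.symm⟩
  -- endpoint sets
  have hE : ∀ (h0 : ℕ) (l0 : Fin (2 * h0 - 1) → ℕ) (S0 : Diagram (2 * h0)),
      S0.Perfect → 1 ≤ h0 →
      (S0.arcs.image (cmap h0 l0)).biUnion (fun a => {a.1, a.2}) =
        (Finset.Icc 1 (2 * h0)).image (pos h0 l0) := by
    intro h0 l0 S0 hP hh0
    ext x
    simp only [Finset.mem_image, Finset.mem_biUnion, Finset.mem_Icc,
      Finset.mem_insert, Finset.mem_singleton]
    constructor
    · rintro ⟨b, ⟨a, ha, rfl⟩, hx⟩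
      have hv := S0.valid a ha
      rcases hx with rfl | rfl
      · exact ⟨a.1, ⟨hv.1, by omega⟩, rfl⟩
      · exact ⟨a.2, ⟨by omega, hv.2.2⟩, rfl⟩
    · rintro ⟨v, ⟨hva, hvb⟩, rfl⟩
      obtain ⟨a, ha, hva'⟩ := hP v hva hvb
      refine ⟨cmap h0 l0 a, ⟨a, ha, rfl⟩, ?_⟩
      rcases hva' with rfl | rfl
      · exact Or.inl rfl
      · exact Or.inr rfl
  have hEE : (Finset.Icc 1 (2 * h)).image (pos h lx) =
      (Finset.Icc 1 (2 * h')).image (pos h' lx') := by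
    rw [← hE h lx S hS.2.1 hh, ← hE h' lx' S' hS'.2.1 hh', himg]
  have hcard : ∀ (h0 : ℕ) (l0 : Fin (2 * h0 - 1) → ℕ),
      ((Finset.Icc 1 (2 * h0)).image (pos h0 l0)).card = 2 * h0 := by
    intro h0 l0
    rw [Finset.card_image_of_injective _ (pos_strictMono h0 l0).injective,
      Nat.card_Icc]
    omega
  have hhh : h = h' := by
    have := congrArg Finset.card hEE
    rw [hcard h lx, hcard h' lx'] at this
    omega
  subst hhh
  -- positions agree
  have hpos : ∀ v, 1 ≤ v → v ≤ 2 * h → pos h lx v = pos h lx' v := by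
    have hEcard := hcard h lx
    have hf1 : (fun v : Fin (2 * h) => pos h lx ((v : ℕ) + 1)) =
        ((Finset.Icc 1 (2 * h)).image (pos h lx)).orderEmbOfFin hEcard :=
      Finset.orderEmbOfFin_unique hEcard
        (fun v => Finset.mem_image.mpr ⟨(v : ℕ) + 1,
          Finset.mem_Icc.mpr ⟨by omega, by omega⟩, rfl⟩)
        (fun v w hvw => (pos_strictMono h lx) (by omega : (v : ℕ) + 1 < (w : ℕ) + 1))
    have hf2 : (fun v : Fin (2 * h) => pos h lx' ((v : ℕ) + 1)) =
        ((Finset.Icc 1 (2 * h)).image (pos h lx)).orderEmbOfFin hEcard :=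
      Finset.orderEmbOfFin_unique hEcard
        (fun v => by
          rw [hEE]
          exact Finset.mem_image.mpr ⟨(v : ℕ) + 1,
            Finset.mem_Icc.mpr ⟨by omega, by omega⟩, rfl⟩)
        (fun v w hvw => (pos_strictMono h lx') (by omega : (v : ℕ) + 1 < (w : ℕ) + 1))
    intro v hv1 hv2
    have := congrFun (hf1.trans hf2.symm) ⟨v - 1, by omega⟩
    simpa [show v - 1 + 1 = v by omega] using this
  -- gap sizes agree
  have hl : ∀ i : Fin (2 * h - 1), lx i = lx' i := by
    intro i
    have hi := i.isLt
    have e1 := pos_gap h lx i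
    have e2 := pos_gap h lx' i
    have p1 := hpos ((i : ℕ) + 1) (by omega) (by omega)
    have p2 := hpos ((i : ℕ) + 2) (by omega) (by omega)
    omega
  -- cores agree
  have hSarcs : S.arcs = S'.arcs := by
    have key : ∀ a a' : ℕ × ℕ, a ∈ S.arcs → a' ∈ S'.arcs →
        cmap h lx a = cmap h lx' a' → a = a' := by
      intro a a' ha ha' he
      have hv : 1 ≤ a.1 ∧ a.1 < a.2 ∧ a.2 ≤ 2 * h := S.valid a ha
      have hv' : 1 ≤ a'.1 ∧ a'.1 < a'.2 ∧ a'.2 ≤ 2 * h := S'.valid a' ha'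
      have e1 : pos h lx a.1 = pos h lx' a'.1 := congrArg Prod.fst he
      have e2 : pos h lx a.2 = pos h lx' a'.2 := congrArg Prod.snd he
      rw [← hpos a'.1 (by omega) (by omega)] at e1
      rw [← hpos a'.2 (by omega) (by omega)] at e2
      exact Prod.ext (pos_inj h lx e1) (pos_inj h lx e2)
    ext a
    constructor
    · intro ha
      have hbA : cmap h lx a ∈ asmArcs h lx S fx :=
        (mem_asmArcs h lx S fx).mpr (Or.inl ⟨a, ha, rfl⟩)
      obtain ⟨a', ha', he⟩ := (hcomp _ hbA).mp ⟨a, ha, rfl⟩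
      rwa [key a a' ha ha' he]
    · intro ha
      have hbA : cmap h lx' a ∈ asmArcs h lx S fx := by
        rw [hA]
        exact (mem_asmArcs h lx' S' fx').mpr (Or.inl ⟨a, ha, rfl⟩)
      obtain ⟨a', ha', he⟩ := (hcomp _ hbA).mpr ⟨a, ha, rfl⟩
      rwa [← key a' a ha' ha he.symm]
  -- gap maps agree
  have hgm : ∀ (i : Fin (2 * h - 1)) (a : ℕ × ℕ),
      gmap h lx i a = gmap h lx' i a := by
    intro i a
    have hi := i.isLt
    simp only [gmap, hpos ((i : ℕ) + 1) (by omega) (by omega)]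
  -- fillings agree
  have hfarcs : ∀ i : Fin (2 * h - 1), (fx i).arcs = (fx' i).arcs := by
    intro i
    have hi := i.isLt
    have p1 := hpos ((i : ℕ) + 1) (by omega) (by omega)
    have p2 := hpos ((i : ℕ) + 2) (by omega) (by omega)
    have himg2 : (fx i).arcs.image (gmap h lx i) = (fx' i).arcs.image (gmap h lx i) := by
      ext b
      simp only [Finset.mem_image]
      constructor
      · rintro ⟨a, ha, rfl⟩
        obtain ⟨hbA, hlo, hhi⟩ := (asm_gap_iff h lx S fx i).mpr ⟨a, ha, rfl⟩
        rw [hA] at hbA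
        rw [p1] at hlo
        rw [p2] at hhi
        obtain ⟨a', ha', he⟩ := (asm_gap_iff h lx' S' fx' i).mp ⟨hbA, hlo, hhi⟩
        exact ⟨a', ha', by rw [hgm i a', ← he, hgm i a]⟩
      · rintro ⟨a, ha, rfl⟩
        obtain ⟨hbA, hlo, hhi⟩ := (asm_gap_iff h lx' S' fx' i).mpr ⟨a, ha, rfl⟩
        rw [← hA] at hbA
        rw [← p1] at hlo
        rw [← p2] at hhi
        have hb2 : gmap h lx' i a ∈ asmArcs h lx S fx ∧
            pos h lx ((i : ℕ) + 1) < (gmap h lx' i a).1 ∧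
            (gmap h lx' i a).2 < pos h lx ((i : ℕ) + 2) := ⟨hbA, hlo, hhi⟩
        obtain ⟨a', ha', he⟩ := (asm_gap_iff h lx S fx i).mp hb2
        exact ⟨a', ha', by rw [← he, hgm i a]⟩
    exact Finset.image_injective (gmap_inj h lx i) himg2
  -- assemble the equality
  have hcore : (⟨S, hS⟩ : CoreTy h) = ⟨S', hS'⟩ :=
    Subtype.ext (diagramExt hSarcs)
  have hfill : (Subtype.mk g hg : FillTy (2 * h - 1) (n - h)) = Subtype.mk g' hg' :=
    Subtype.ext (funext fun i => sigma_MTy_ext (hl i) (hfarcs i))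
  have hpair : ((⟨S, hS⟩ : CoreTy h), (Subtype.mk g hg : FillTy (2 * h - 1) (n - h))) =
      (⟨S', hS'⟩, Subtype.mk g' hg') := by rw [hcore, hfill]
  exact Sigma.ext rfl (heq_of_eq hpair)

end IrrPf
end
noncomputable section
namespace IrrPf
open Diagram Finset

theorem Phi_surj {n : ℕ} (hn : 1 ≤ n) : Function.Surjective (Phi (n := n)) := by
  rintro ⟨M, hM3, hMP, hMI⟩
  classical
  obtain ⟨a0, ha0, hv0⟩ := hMP 1 le_rfl (by omega)
  have ha01 : a0.1 = 1 := arc_at_one M ha0 hv0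
  set C : Finset (ℕ × ℕ) := M.arcs.filter
    (fun b => Relation.ReflTransGen (rel' M.arcs) a0 b) with hCdef
  have hCsub : C ⊆ M.arcs := Finset.filter_subset _ _
  have hmemC : ∀ {b : ℕ × ℕ}, b ∈ C ↔
      b ∈ M.arcs ∧ Relation.ReflTransGen (rel' M.arcs) a0 b := by
    intro b; rw [hCdef]; exact Finset.mem_filter
  have ha0C : a0 ∈ C := hmemC.mpr ⟨ha0, Relation.ReflTransGen.refl⟩
  set V : Finset ℕ := C.biUnion (fun a => ({a.1, a.2} : Finset ℕ)) with hVdef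
  have hVmem : ∀ {x : ℕ}, x ∈ V ↔ ∃ c ∈ C, x = c.1 ∨ x = c.2 := by
    intro x
    rw [hVdef]
    simp only [Finset.mem_biUnion, Finset.mem_insert, Finset.mem_singleton]
  set h := C.card with hhdef
  have hh : 1 ≤ h := by
    rw [hhdef]
    exact Finset.card_pos.mpr ⟨a0, ha0C⟩
  have hVc2 : V.card = 2 * h := by
    rw [hVdef, hhdef]
    exact two_mul_card C
      (fun a ha => by have := M.valid a (hCsub ha); omega)
      (fun a ha b hb hne => M.disj a (hCsub ha) b (hCsub hb) hne)
  have hVrange : ∀ x ∈ V, 1 ≤ x ∧ x ≤ 2 * n := by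
    intro x hx
    obtain ⟨c, hc, hxc⟩ := hVmem.mp hx
    have := M.valid c (hCsub hc)
    omega
  have h1V : (1 : ℕ) ∈ V := hVmem.mpr ⟨a0, ha0C, Or.inl ha01.symm⟩
  obtain ⟨bt, hbt, hvt⟩ := hMP (2 * n) (by omega) le_rfl
  have hbt2 : bt.2 = 2 * n := arc_at_top M hbt hvt
  have htopV : (2 * n : ℕ) ∈ V :=
    hVmem.mpr ⟨bt, hmemC.mpr ⟨hbt, top_in_C M ha0 ha01 hMI hbt hbt2⟩, Or.inr hbt2.symm⟩
  -- the increasing enumeration of V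
  set vfun : ℕ → ℕ := fun v =>
    if hv : 1 ≤ v ∧ v ≤ 2 * h then (V.orderEmbOfFin hVc2 ⟨v - 1, by omega⟩ : ℕ)
    else 0 with hvfdef
  have hvfun_eq : ∀ v (hv1 : 1 ≤ v) (hv2 : v ≤ 2 * h),
      vfun v = V.orderEmbOfFin hVc2 ⟨v - 1, by omega⟩ := by
    intro v hv1 hv2
    rw [hvfdef]
    simp only
    rw [dif_pos ⟨hv1, hv2⟩]
  have hvfun_lt : ∀ v w, 1 ≤ v → v ≤ 2 * h → 1 ≤ w → w ≤ 2 * h →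
      (v < w ↔ vfun v < vfun w) := by
    intro v w hv1 hv2 hw1 hw2
    rw [hvfun_eq v hv1 hv2, hvfun_eq w hw1 hw2]
    rw [(V.orderEmbOfFin hVc2).lt_iff_lt, Fin.mk_lt_mk]
    omega
  have hvfun_mem : ∀ v, 1 ≤ v → v ≤ 2 * h → vfun v ∈ V := by
    intro v hv1 hv2
    rw [hvfun_eq v hv1 hv2]
    exact Finset.orderEmbOfFin_mem V hVc2 _
  have hvfun_surj : ∀ x ∈ V, ∃ v, 1 ≤ v ∧ v ≤ 2 * h ∧ vfun v = x := by
    intro x hx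
    have hxr : x ∈ Set.range (V.orderEmbOfFin hVc2) := by
      rw [Finset.range_orderEmbOfFin]
      exact Finset.mem_coe.mpr hx
    obtain ⟨i, hi⟩ := hxr
    have hieq : (⟨(i : ℕ) + 1 - 1, by omega⟩ : Fin (2 * h)) = i := Fin.ext (by simp)
    refine ⟨(i : ℕ) + 1, by omega, by have := i.isLt; omega, ?_⟩
    rw [hvfun_eq _ (by omega) (by have := i.isLt; omega), hieq, hi]
  have hvf1 : vfun 1 = 1 := by
    obtain ⟨v, hv1, hv2, hveq⟩ := hvfun_surj 1 h1V
    have hmem := hvfun_mem 1 le_rfl (by omega)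
    rcases eq_or_lt_of_le hv1 with heq | hlt
    · rw [← heq] at hveq; exact hveq
    · have := (hvfun_lt 1 v le_rfl (by omega) hv1 hv2).mp hlt
      have hb := hVrange _ hmem
      omega
  have hvftop : vfun (2 * h) = 2 * n := by
    obtain ⟨v, hv1, hv2, hveq⟩ := hvfun_surj (2 * n) htopV
    have hmem := hvfun_mem (2 * h) (by omega) le_rfl
    rcases eq_or_lt_of_le hv2 with heq | hlt
    · rw [heq] at hveq; exact hveq
    · have := (hvfun_lt v (2 * h) hv1 (by omega) (by omega) le_rfl).mp hlt
      have hb := hVrange _ hmem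
      omega
  -- the rank function, inverse to vfun on V
  set rank : ℕ → ℕ := fun x =>
    if hx : x ∈ V then (hvfun_surj x hx).choose else 0 with hrkdef
  have hrank_spec : ∀ x (hx : x ∈ V),
      1 ≤ rank x ∧ rank x ≤ 2 * h ∧ vfun (rank x) = x := by
    intro x hx
    have hspec := (hvfun_surj x hx).choose_spec
    rw [hrkdef]
    simp only
    rw [dif_pos hx]
    exact hspec
  have hrank_iff : ∀ x y, x ∈ V → y ∈ V → (x < y ↔ rank x < rank y) := by
    intro x y hx hy
    obtain ⟨hx1, hx2, hx3⟩ := hrank_spec x hx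
    obtain ⟨hy1, hy2, hy3⟩ := hrank_spec y hy
    constructor
    · intro hxy
      have hv : vfun (rank x) < vfun (rank y) := by rw [hx3, hy3]; exact hxy
      exact (hvfun_lt _ _ hx1 hx2 hy1 hy2).mpr hv
    · intro hr
      have := (hvfun_lt _ _ hx1 hx2 hy1 hy2).mp hr
      rwa [hx3, hy3] at this
  have hrank_injV : ∀ x y, x ∈ V → y ∈ V → rank x = rank y → x = y := by
    intro x y hx hy hexy
    obtain ⟨_, _, hx3⟩ := hrank_spec x hx
    obtain ⟨_, _, hy3⟩ := hrank_spec y hy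
    rw [← hx3, ← hy3, hexy]
  have hrank_vfun : ∀ v, 1 ≤ v → v ≤ 2 * h → rank (vfun v) = v := by
    intro v hv1 hv2
    have hm := hvfun_mem v hv1 hv2
    obtain ⟨hr1, hr2, hr3⟩ := hrank_spec _ hm
    rcases Nat.lt_trichotomy (rank (vfun v)) v with hlt | heq | hgt
    · have := (hvfun_lt _ _ hr1 hr2 hv1 hv2).mp hlt
      omega
    · exact heq
    · have := (hvfun_lt _ _ hv1 hv2 hr1 hr2).mp hgt
      omega
  -- arcs outside the component avoid V
  have hnotC_V : ∀ b ∈ M.arcs, ¬ Relation.ReflTransGen (rel' M.arcs) a0 b →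
      b.1 ∉ V ∧ b.2 ∉ V := by
    intro b hb hnb
    constructor <;>
    · intro hx
      obtain ⟨c, hc, hxc⟩ := hVmem.mp hx
      obtain ⟨hcA, hcR⟩ := hmemC.mp hc
      have hne : b ≠ c := fun he => hnb (he ▸ hcR)
      have := M.disj b hb c hcA hne
      omega
  have hnoV : ∀ v, 1 ≤ v → v + 1 ≤ 2 * h → ∀ y ∈ V,
      ¬ (vfun v < y ∧ y < vfun (v + 1)) := by
    rintro v hv1 hv2 y hy ⟨hy1, hy2⟩
    obtain ⟨w, hw1, hw2, rfl⟩ := hvfun_surj y hy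
    have e1 := (hvfun_lt v w hv1 (by omega) hw1 hw2).mpr hy1
    have e2 := (hvfun_lt w (v + 1) hw1 hw2 (by omega) hv2).mpr hy2
    omega
  -- any arc with an endpoint strictly inside a gap lies inside the gap
  have hgapArc : ∀ v, 1 ≤ v → v + 1 ≤ 2 * h → ∀ b ∈ M.arcs,
      ((vfun v < b.1 ∧ b.1 < vfun (v + 1)) ∨ (vfun v < b.2 ∧ b.2 < vfun (v + 1))) →
      vfun v < b.1 ∧ b.2 < vfun (v + 1) := by
    intro v hv1 hv2 b hb hx
    have hbnC : ¬ Relation.ReflTransGen (rel' M.arcs) a0 b := by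
      intro hR
      have hbC : b ∈ C := hmemC.mpr ⟨hb, hR⟩
      have h1Vb : b.1 ∈ V := hVmem.mpr ⟨b, hbC, Or.inl rfl⟩
      have h2Vb : b.2 ∈ V := hVmem.mpr ⟨b, hbC, Or.inr rfl⟩
      rcases hx with hx | hx
      · exact hnoV v hv1 hv2 b.1 h1Vb hx
      · exact hnoV v hv1 hv2 b.2 h2Vb hx
    have hV1 := hnotC_V b hb hbnC
    obtain ⟨c1, hc1, he1⟩ := hVmem.mp (hvfun_mem v hv1 (by omega))
    obtain ⟨c2, hc2, he2⟩ := hVmem.mp (hvfun_mem (v + 1) (by omega) hv2)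
    have ho1 := outside M ha0 ha01 hb hbnC (hmemC.mp hc1).2
    have ho2 := outside M ha0 ha01 hb hbnC (hmemC.mp hc2).2
    have hvb := M.valid b hb
    have hne1 : b.1 ≠ vfun v := fun he => hV1.1 (he ▸ hvfun_mem v hv1 (by omega))
    have hne2 : b.2 ≠ vfun v := fun he => hV1.2 (he ▸ hvfun_mem v hv1 (by omega))
    have hne3 : b.1 ≠ vfun (v + 1) := fun he => hV1.1 (he ▸ hvfun_mem (v + 1) (by omega) hv2)
    have hne4 : b.2 ≠ vfun (v + 1) := fun he => hV1.2 (he ▸ hvfun_mem (v + 1) (by omega) hv2)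
    have hlt := (hvfun_lt v (v + 1) hv1 (by omega) (by omega) hv2).mp (by omega)
    omega
  -- gap fillings
  set Fset : Fin (2 * h - 1) → Finset (ℕ × ℕ) := fun i =>
    M.arcs.filter (fun b => vfun ((i : ℕ) + 1) < b.1 ∧ b.2 < vfun ((i : ℕ) + 2))
    with hFdef
  have hFmem : ∀ (i : Fin (2 * h - 1)) {b : ℕ × ℕ}, b ∈ Fset i ↔
      b ∈ M.arcs ∧ vfun ((i : ℕ) + 1) < b.1 ∧ b.2 < vfun ((i : ℕ) + 2) := by
    intro i b; rw [hFdef]; exact Finset.mem_filter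
  set l0 : Fin (2 * h - 1) → ℕ := fun i => (Fset i).card with hl0def
  have hl0eq : ∀ i, l0 i = (Fset i).card := fun i => rfl
  have hgsize : ∀ i : Fin (2 * h - 1),
      vfun ((i : ℕ) + 2) - vfun ((i : ℕ) + 1) - 1 = 2 * l0 i := by
    intro i
    have hi := i.isLt
    have hIoo : Finset.Ioo (vfun ((i : ℕ) + 1)) (vfun ((i : ℕ) + 2)) =
        (Fset i).biUnion (fun a => {a.1, a.2}) := by
      ext x
      simp only [Finset.mem_Ioo, Finset.mem_biUnion, Finset.mem_insert,
        Finset.mem_singleton]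
      constructor
      · rintro ⟨hx1, hx2⟩
        have r1 := hVrange _ (hvfun_mem ((i : ℕ) + 1) (by omega) (by omega))
        have r2 := hVrange _ (hvfun_mem ((i : ℕ) + 2) (by omega) (by omega))
        obtain ⟨b, hb, hxb⟩ := hMP x (by omega) (by omega)
        have hcast : vfun ((i : ℕ) + 1 + 1) = vfun ((i : ℕ) + 2) := rfl
        have hgb := hgapArc ((i : ℕ) + 1) (by omega) (by omega) b hb
          (by rcases hxb with hxx | hxx
              · exact Or.inl (by omega)
              · exact Or.inr (by omega))
        exact ⟨b, (hFmem i).mpr ⟨hb, hgb⟩, by omega⟩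
      · rintro ⟨b, hbF, hxb⟩
        obtain ⟨hbA, hb1, hb2⟩ := (hFmem i).mp hbF
        have hvb := M.valid b hbA
        omega
    have hcardIoo := Nat.card_Ioo (vfun ((i : ℕ) + 1)) (vfun ((i : ℕ) + 2))
    rw [hIoo] at hcardIoo
    have h2 := two_mul_card (Fset i)
      (fun a ha => by have := M.valid a ((hFmem i).mp ha).1; omega)
      (fun a ha b hb hne =>
        M.disj a ((hFmem i).mp ha).1 b ((hFmem i).mp hb).1 hne)
    rw [hl0eq i]
    omega
  -- positions agree with the enumeration of V
  have hposv : ∀ v, 1 ≤ v → v ≤ 2 * h → pos h l0 v = vfun v := by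
    intro v
    induction v with
    | zero => intro hv1 _; omega
    | succ w ih =>
      intro h1 h2
      rcases Nat.eq_zero_or_pos w with rfl | hw
      · rw [pos_one]
        exact hvf1.symm
      · have ihv := ih hw (by omega)
        rw [pos_succ h l0 w hw, ihv]
        have hix : w - 1 < 2 * h - 1 := by omega
        have hlf : lf h l0 (w - 1) = l0 ⟨w - 1, hix⟩ := by
          simp only [lf]; rw [dif_pos hix]
        have hgs := hgsize ⟨w - 1, hix⟩
        simp only [Fin.val_mk] at hgs
        rw [show w - 1 + 1 = w by omega, show w - 1 + 2 = w + 1 by omega] at hgs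
        have hmono := (hvfun_lt w (w + 1) hw (by omega) (by omega) h2).mp (by omega)
        omega
  have htot : pos h l0 (2 * h) = 2 * n := by
    rw [hposv (2 * h) (by omega) le_rfl]
    exact hvftop
  have hsum0 := pos_top h l0 hh
  have hhn : h ≤ n := by omega
  have hsum : ∑ i, l0 i = n - h := by omega
  -- the core diagram
  have hCV : ∀ a ∈ C, a.1 ∈ V ∧ a.2 ∈ V := fun a ha =>
    ⟨hVmem.mpr ⟨a, ha, Or.inl rfl⟩, hVmem.mpr ⟨a, ha, Or.inr rfl⟩⟩
  set rmap : ℕ × ℕ → ℕ × ℕ := fun a => (rank a.1, rank a.2) with hrmdef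
  have hS0valid : ∀ b ∈ C.image rmap, 1 ≤ b.1 ∧ b.1 < b.2 ∧ b.2 ≤ 2 * h := by
    intro b hb
    obtain ⟨a, ha, rfl⟩ := Finset.mem_image.mp hb
    obtain ⟨h1V', h2V'⟩ := hCV a ha
    obtain ⟨e1, e2, _⟩ := hrank_spec _ h1V'
    obtain ⟨e1', e2', _⟩ := hrank_spec _ h2V'
    have hlt := (hrank_iff a.1 a.2 h1V' h2V').mp (M.valid a (hCsub ha)).2.1
    exact ⟨e1, hlt, e2'⟩
  have hS0disj : ∀ a ∈ C.image rmap, ∀ b ∈ C.image rmap, a ≠ b →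
      a.1 ≠ b.1 ∧ a.1 ≠ b.2 ∧ a.2 ≠ b.1 ∧ a.2 ≠ b.2 := by
    intro b hb b' hb' hne
    obtain ⟨a, ha, rfl⟩ := Finset.mem_image.mp hb
    obtain ⟨a', ha', rfl⟩ := Finset.mem_image.mp hb'
    have hane : a ≠ a' := fun he => hne (by rw [he])
    have hd := M.disj a (hCsub ha) a' (hCsub ha') hane
    obtain ⟨hV1, hV2⟩ := hCV a ha
    obtain ⟨hV1', hV2'⟩ := hCV a' ha'
    refine ⟨?_, ?_, ?_, ?_⟩ <;> simp only [hrmdef] <;> intro he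
    · exact hd.1 (hrank_injV _ _ hV1 hV1' he)
    · exact hd.2.1 (hrank_injV _ _ hV1 hV2' he)
    · exact hd.2.2.1 (hrank_injV _ _ hV2 hV1' he)
    · exact hd.2.2.2 (hrank_injV _ _ hV2 hV2' he)
  let S0 : Diagram (2 * h) := ⟨C.image rmap, hS0valid, hS0disj⟩
  have hS0arcs : S0.arcs = C.image rmap := rfl
  have hS0perf : S0.Perfect := by
    intro w hw1 hw2
    have hm := hvfun_mem w hw1 hw2
    obtain ⟨c, hc, hxc⟩ := hVmem.mp hm
    refine ⟨rmap c, Finset.mem_image.mpr ⟨c, hc, rfl⟩, ?_⟩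
    rcases hxc with hxc | hxc
    · left
      show w = rank c.1
      rw [← hxc, hrank_vfun w hw1 hw2]
    · right
      show w = rank c.2
      rw [← hxc, hrank_vfun w hw1 hw2]
  have hS0nc : S0.Noncrossing 3 := by
    rintro ⟨a, hmem, hc2, hc3, hc4⟩
    choose bb hbb hbeq using fun t => Finset.mem_image.mp (hmem t)
    have hkey : ∀ t, rank (bb t).1 = (a t).1 ∧ rank (bb t).2 = (a t).2 := by
      intro t
      have := hbeq t
      exact ⟨congrArg Prod.fst this, congrArg Prod.snd this⟩
    refine hM3 (hasCrossing_pullback M rank (· ∈ V) hrank_iff bb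
      (fun t => hCsub (hbb t)) (fun t => hCV _ (hbb t)) ?_ ?_ ?_)
    · intro s t hst
      have e1 := (hkey s).1
      have e2 := (hkey t).1
      have := hc2 s t hst
      omega
    · intro s t hst
      have e1 := (hkey s).2
      have e2 := (hkey t).2
      have := hc3 s t hst
      omega
    · intro s t
      have e1 := (hkey s).1
      have e2 := (hkey t).2
      have := hc4 s t
      omega
  have hrelC : ∀ c, Relation.ReflTransGen (rel' M.arcs) a0 c →
      Relation.ReflTransGen (rel' C) a0 c := by
    intro c hc
    induction hc with
    | refl => exact Relation.ReflTransGen.refl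
    | @tail c d hprev hrel ih =>
      exact ih.tail ⟨hmemC.mpr ⟨hrel.1, hprev⟩,
        hmemC.mpr ⟨hrel.2.1, hprev.tail hrel⟩, hrel.2.2⟩
  have hS0ccon : CCon S0 := by
    intro x hx y hy
    rw [hS0arcs] at hx hy
    obtain ⟨c, hc, rfl⟩ := Finset.mem_image.mp hx
    obtain ⟨d, hd, rfl⟩ := Finset.mem_image.mp hy
    have hcd : Relation.ReflTransGen (rel' C) c d :=
      (rtg_rel'_symm (hrelC c (hmemC.mp hc).2)).trans (hrelC d (hmemC.mp hd).2)
    have := rtg_map (A := C) (B := S0.arcs) (φ := rank) (P := (· ∈ V))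
      hrank_iff hCV
      (fun a ha => by rw [hS0arcs]; exact Finset.mem_image.mpr ⟨a, ha, rfl⟩) hcd
    exact this
  have hS0skel : 2 ≤ h → S0.IsSkeleton := by
    intro h2
    refine skeleton_of_ccon hS0ccon ?_
    have := perfect_two_mul S0 hS0perf
    omega
  -- the shifted gap fillings as diagrams
  set smap : Fin (2 * h - 1) → ℕ × ℕ → ℕ × ℕ :=
    fun i b => (b.1 - vfun ((i : ℕ) + 1), b.2 - vfun ((i : ℕ) + 1)) with hsmdef
  have hFvalid : ∀ i : Fin (2 * h - 1), ∀ b ∈ (Fset i).image (smap i),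
      1 ≤ b.1 ∧ b.1 < b.2 ∧ b.2 ≤ 2 * l0 i := by
    intro i b hb
    obtain ⟨a, ha, rfl⟩ := Finset.mem_image.mp hb
    obtain ⟨hA, h1, h2⟩ := (hFmem i).mp ha
    have hva := M.valid a hA
    have hgs := hgsize i
    have hi := i.isLt
    have hmono := (hvfun_lt ((i : ℕ) + 1) ((i : ℕ) + 2) (by omega) (by omega)
      (by omega) (by omega)).mp (by omega)
    show 1 ≤ a.1 - vfun ((i : ℕ) + 1) ∧
      a.1 - vfun ((i : ℕ) + 1) < a.2 - vfun ((i : ℕ) + 1) ∧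
      a.2 - vfun ((i : ℕ) + 1) ≤ 2 * l0 i
    omega
  have hFdisj : ∀ i : Fin (2 * h - 1), ∀ b ∈ (Fset i).image (smap i),
      ∀ b' ∈ (Fset i).image (smap i), b ≠ b' →
      b.1 ≠ b'.1 ∧ b.1 ≠ b'.2 ∧ b.2 ≠ b'.1 ∧ b.2 ≠ b'.2 := by
    intro i b hb b' hb' hne
    obtain ⟨a, ha, rfl⟩ := Finset.mem_image.mp hb
    obtain ⟨a', ha', rfl⟩ := Finset.mem_image.mp hb'
    have hane : a ≠ a' := fun he => hne (by rw [he])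
    obtain ⟨hA, h1, h2⟩ := (hFmem i).mp ha
    obtain ⟨hA', h1', h2'⟩ := (hFmem i).mp ha'
    have hva := M.valid a hA
    have hva' := M.valid a' hA'
    have hd := M.disj a hA a' hA' hane
    show a.1 - vfun ((i : ℕ) + 1) ≠ a'.1 - vfun ((i : ℕ) + 1) ∧
      a.1 - vfun ((i : ℕ) + 1) ≠ a'.2 - vfun ((i : ℕ) + 1) ∧
      a.2 - vfun ((i : ℕ) + 1) ≠ a'.1 - vfun ((i : ℕ) + 1) ∧
      a.2 - vfun ((i : ℕ) + 1) ≠ a'.2 - vfun ((i : ℕ) + 1)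
    omega
  let fillD : ∀ i : Fin (2 * h - 1), Diagram (2 * l0 i) :=
    fun i => ⟨(Fset i).image (smap i), hFvalid i, hFdisj i⟩
  have hFperf : ∀ i, (fillD i).Perfect := by
    intro i o ho1 ho2
    have hi := i.isLt
    have hgs := hgsize i
    have hmono := (hvfun_lt ((i : ℕ) + 1) ((i : ℕ) + 2) (by omega) (by omega)
      (by omega) (by omega)).mp (by omega)
    have r1 := hVrange _ (hvfun_mem ((i : ℕ) + 1) (by omega) (by omega))
    have r2 := hVrange _ (hvfun_mem ((i : ℕ) + 2) (by omega) (by omega))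
    obtain ⟨b, hb, hxb⟩ := hMP (vfun ((i : ℕ) + 1) + o) (by omega) (by omega)
    have hcast : vfun ((i : ℕ) + 1 + 1) = vfun ((i : ℕ) + 2) := rfl
    have hgb := hgapArc ((i : ℕ) + 1) (by omega) (by omega) b hb
      (by rcases hxb with hxx | hxx
          · exact Or.inl (by omega)
          · exact Or.inr (by omega))
    refine ⟨smap i b, ?_, ?_⟩
    · show smap i b ∈ (Fset i).image (smap i)
      exact Finset.mem_image.mpr ⟨b, (hFmem i).mpr ⟨hb, by omega⟩, rfl⟩
    · show o = b.1 - vfun ((i : ℕ) + 1) ∨ o = b.2 - vfun ((i : ℕ) + 1)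
      omega
  have hFnc : ∀ i, (fillD i).Noncrossing 3 := by
    intro i hcr
    obtain ⟨a, hmem, hc2, hc3, hc4⟩ := hcr
    have hi := i.isLt
    choose bb hbb hbeq using fun t =>
      Finset.mem_image.mp (show a t ∈ (Fset i).image (smap i) from hmem t)
    have hkey : ∀ t, (bb t).1 - vfun ((i : ℕ) + 1) = (a t).1 ∧
        (bb t).2 - vfun ((i : ℕ) + 1) = (a t).2 := fun t =>
      ⟨congrArg Prod.fst (hbeq t), congrArg Prod.snd (hbeq t)⟩
    have hbnd : ∀ t, vfun ((i : ℕ) + 1) < (bb t).1 ∧ vfun ((i : ℕ) + 1) < (bb t).2 := by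
      intro t
      obtain ⟨hA, h1, h2⟩ := (hFmem i).mp (hbb t)
      have := M.valid (bb t) hA
      omega
    refine hM3 (hasCrossing_pullback M (fun x => x - vfun ((i : ℕ) + 1))
      (fun x => vfun ((i : ℕ) + 1) < x)
      (fun x y hx hy => by
        show x < y ↔ x - vfun ((i : ℕ) + 1) < y - vfun ((i : ℕ) + 1)
        omega)
      bb (fun t => ((hFmem i).mp (hbb t)).1) hbnd ?_ ?_ ?_)
    · intro s t hst
      show (bb s).1 - vfun ((i : ℕ) + 1) < (bb t).1 - vfun ((i : ℕ) + 1)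
      have := hc2 s t hst
      have e1 := (hkey s).1
      have e2 := (hkey t).1
      omega
    · intro s t hst
      show (bb s).2 - vfun ((i : ℕ) + 1) < (bb t).2 - vfun ((i : ℕ) + 1)
      have := hc3 s t hst
      have e1 := (hkey s).2
      have e2 := (hkey t).2
      omega
    · intro s t
      show (bb s).1 - vfun ((i : ℕ) + 1) < (bb t).2 - vfun ((i : ℕ) + 1)
      have := hc4 s t
      have e1 := (hkey s).1
      have e2 := (hkey t).2
      omega
  -- the assembled diagram equals M
  have harcs : asmArcs h l0 S0 fillD = M.arcs := by
    ext b
    rw [mem_asmArcs]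
    constructor
    · rintro (⟨a, ha, rfl⟩ | ⟨i, a, ha, rfl⟩)
      · rw [hS0arcs] at ha
        obtain ⟨c, hc, rfl⟩ := Finset.mem_image.mp ha
        obtain ⟨hV1, hV2⟩ := hCV c hc
        obtain ⟨r1, r2, r3⟩ := hrank_spec _ hV1
        obtain ⟨r1', r2', r3'⟩ := hrank_spec _ hV2
        have heq : cmap h l0 (rmap c) = c := by
          show (pos h l0 (rank c.1), pos h l0 (rank c.2)) = c
          rw [hposv _ r1 r2, hposv _ r1' r2', r3, r3']
        rw [heq]
        exact hCsub hc
      · obtain ⟨cF, hcF, rfl⟩ :=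
          Finset.mem_image.mp (show a ∈ (Fset i).image (smap i) from ha)
        obtain ⟨hA, h1, h2⟩ := (hFmem i).mp hcF
        have hi := i.isLt
        have hp1 := hposv ((i : ℕ) + 1) (by omega) (by omega)
        have hvb := M.valid cF hA
        have heq : gmap h l0 i (smap i cF) = cF := by
          show (pos h l0 ((i : ℕ) + 1) + (cF.1 - vfun ((i : ℕ) + 1)),
            pos h l0 ((i : ℕ) + 1) + (cF.2 - vfun ((i : ℕ) + 1))) = cF
          rw [hp1]
          exact Prod.ext (by omega) (by omega)
        rw [heq]
        exact hA
    · intro hb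
      by_cases hbC : Relation.ReflTransGen (rel' M.arcs) a0 b
      · left
        have hcC : b ∈ C := hmemC.mpr ⟨hb, hbC⟩
        obtain ⟨hV1, hV2⟩ := hCV b hcC
        obtain ⟨r1, r2, r3⟩ := hrank_spec _ hV1
        obtain ⟨r1', r2', r3'⟩ := hrank_spec _ hV2
        refine ⟨rmap b, by rw [hS0arcs]; exact Finset.mem_image.mpr ⟨b, hcC, rfl⟩, ?_⟩
        show b = (pos h l0 (rank b.1), pos h l0 (rank b.2))
        rw [hposv _ r1 r2, hposv _ r1' r2', r3, r3']
      · right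
        have hx1 := (hnotC_V b hb hbC).1
        have hvb := M.valid b hb
        rcases locate h l0 hh (x := b.1) (by omega) (by rw [htot]; omega) with
          ⟨v, hv1, hv2, hveq⟩ | ⟨i, o, ho1, ho2, hoeq⟩
        · exfalso
          rw [hposv v hv1 hv2] at hveq
          exact hx1 (hveq ▸ hvfun_mem v hv1 hv2)
        · have hi := i.isLt
          have hp1 := hposv ((i : ℕ) + 1) (by omega) (by omega)
          have hp2 := hposv ((i : ℕ) + 2) (by omega) (by omega)
          have hgs := hgsize i
          have hmono := (hvfun_lt ((i : ℕ) + 1) ((i : ℕ) + 2) (by omega) (by omega)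
            (by omega) (by omega)).mp (by omega)
          have hcast : vfun ((i : ℕ) + 1 + 1) = vfun ((i : ℕ) + 2) := rfl
          have hb1 : vfun ((i : ℕ) + 1) < b.1 ∧ b.1 < vfun ((i : ℕ) + 2) := by omega
          have hgb := hgapArc ((i : ℕ) + 1) (by omega) (by omega) b hb
            (Or.inl (by omega))
          refine ⟨i, smap i b, ?_, ?_⟩
          · show smap i b ∈ (Fset i).image (smap i)
            exact Finset.mem_image.mpr ⟨b, (hFmem i).mpr ⟨hb, by omega⟩, rfl⟩
          · show b = (pos h l0 ((i : ℕ) + 1) + (b.1 - vfun ((i : ℕ) + 1)),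
              pos h l0 ((i : ℕ) + 1) + (b.2 - vfun ((i : ℕ) + 1)))
            rw [hp1]
            exact Prod.ext (by omega) (by omega)
  refine ⟨⟨⟨h, Finset.mem_Icc.mpr ⟨hh, hhn⟩⟩, ⟨S0, hS0nc, hS0perf, hS0skel⟩,
    ⟨fun i => ⟨l0 i, fillD i, hFnc i, hFperf i⟩, hsum⟩⟩, ?_⟩
  exact Subtype.ext (diagramExt harcs)

end IrrPf
end
noncomputable section
namespace IrrPf
open Diagram Finset

/-- coefficientwise description of powers of `Fgf 3` -/
def Ncount : ℕ → ℕ → ℕ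
  | 0, m => if m = 0 then 1 else 0
  | k + 1, m => ∑ p ∈ Finset.HasAntidiagonal.antidiagonal m, fMatch 3 p.1 * Ncount k p.2

lemma card_MTy (m : ℕ) : Nat.card (MTy m) = fMatch 3 m := rfl

/-- the head/tail decomposition map -/
def fillF (k m : ℕ)
    (y : Σ p : {p : ℕ × ℕ // p ∈ Finset.HasAntidiagonal.antidiagonal m}, MTy p.1.1 × FillTy k p.1.2) :
    FillTy (k + 1) m :=
  ⟨Fin.cons ⟨y.1.1.1, y.2.1⟩ (y.2.2.1), by
    rw [Fin.sum_univ_succ]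
    simp only [Fin.cons_zero, Fin.cons_succ]
    rw [y.2.2.2]
    have := y.1.2
    rw [Finset.HasAntidiagonal.mem_antidiagonal] at this
    exact this⟩

lemma fillF_bij (k m : ℕ) : Function.Bijective (fillF k m) := by
  constructor
  · rintro ⟨⟨⟨p1, p2⟩, hp⟩, xM, g, hg⟩ ⟨⟨⟨p1', p2'⟩, hp'⟩, xM', g', hg'⟩ hEq
    have hfun := congrArg Subtype.val hEq
    simp only [fillF] at hfun
    have hhead : (⟨p1, xM⟩ : Σ m', MTy m') = ⟨p1', xM'⟩ := by
      have := congrFun hfun 0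
      simpa [Fin.cons_zero] using this
    have hp1 : p1 = p1' := congrArg Sigma.fst hhead
    subst hp1
    have hxM : xM = xM' := by
      have := (Sigma.mk.inj_iff.mp hhead).2
      exact eq_of_heq this
    subst hxM
    have hp2 : p2 = p2' := by
      rw [Finset.HasAntidiagonal.mem_antidiagonal] at hp hp'
      omega
    subst hp2
    have hgg : g = g' := by
      funext i
      have := congrFun hfun i.succ
      simpa [Fin.cons_succ] using this
    subst hgg
    rfl
  · rintro ⟨x, hx⟩
    refine ⟨⟨⟨((x 0).1, ∑ i : Fin k, (x i.succ).1), ?_⟩, (x 0).2,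
      ⟨fun i : Fin k => x i.succ, rfl⟩⟩, ?_⟩
    · rw [Finset.HasAntidiagonal.mem_antidiagonal, ← hx, Fin.sum_univ_succ]
    · apply Subtype.ext
      funext i
      refine Fin.cases ?_ ?_ i
      · simp only [fillF, Fin.cons_zero]
      · intro j
        simp only [fillF, Fin.cons_succ]

def fillFinite : ∀ (k m : ℕ), Finite (FillTy k m)
  | 0, m => by
    have : Subsingleton (FillTy 0 m) :=
      ⟨fun a b => Subtype.ext (funext fun i : Fin 0 => i.elim0)⟩
    exact @Finite.of_subsingleton _ this
  | k + 1, m => by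
    haveI : ∀ p : {p : ℕ × ℕ // p ∈ Finset.HasAntidiagonal.antidiagonal m},
        Finite (MTy p.1.1 × FillTy k p.1.2) := fun p => by
      haveI := fillFinite k p.1.2
      infer_instance
    exact Finite.of_surjective (fillF k m) (fillF_bij k m).2

instance (k m : ℕ) : Finite (FillTy k m) := fillFinite k m

lemma nat_card_sigma_attach {α : Type*} (s : Finset α) (β : {x // x ∈ s} → Type*)
    [∀ p, Finite (β p)] :
    Nat.card (Σ p : {x // x ∈ s}, β p) = ∑ p ∈ s.attach, Nat.card (β p) := by
  classical
  letI : ∀ p, Fintype (β p) := fun p => Fintype.ofFinite _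
  rw [Nat.card_eq_fintype_card, Fintype.card_sigma, Finset.univ_eq_attach]
  exact Finset.sum_congr rfl fun p _ => (Nat.card_eq_fintype_card).symm

lemma card_fill : ∀ k m : ℕ, Nat.card (FillTy k m) = Ncount k m := by
  intro k
  induction k with
  | zero =>
    intro m
    rcases Nat.eq_zero_or_pos m with rfl | hm
    · rw [show Ncount 0 0 = 1 from rfl]
      rw [Nat.card_eq_one_iff_unique]
      constructor
      · exact ⟨fun a b => Subtype.ext (funext fun i : Fin 0 => i.elim0)⟩
      · exact ⟨⟨fun i => i.elim0, by simp⟩⟩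
    · have hne : Ncount 0 m = 0 := by
        simp only [Ncount]
        rw [if_neg (by omega)]
      rw [hne]
      have : IsEmpty (FillTy 0 m) := ⟨fun x => by
        have := x.2
        simp at this
        omega⟩
      exact Nat.card_of_isEmpty
  | succ k ih =>
    intro m
    rw [← Nat.card_eq_of_bijective (fillF k m) (fillF_bij k m)]
    rw [nat_card_sigma_attach]
    rw [show Ncount (k + 1) m = ∑ p ∈ Finset.HasAntidiagonal.antidiagonal m,
      fMatch 3 p.1 * Ncount k p.2 from rfl]
    rw [← Finset.sum_attach (Finset.HasAntidiagonal.antidiagonal m) (fun p => fMatch 3 p.1 * Ncount k p.2)]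
    refine Finset.sum_congr rfl fun p _ => ?_
    rw [Nat.card_prod, card_MTy, ih]

end IrrPf
end
noncomputable section
namespace IrrPf
open Diagram Finset

lemma card_CoreTy (h : ℕ) (hh : 1 ≤ h) : Nat.card (CoreTy h) = Scount h := by
  rcases lt_or_ge h 2 with h1 | h2
  · -- h = 1
    have hone : h = 1 := by omega
    subst hone
    rw [show Scount 1 = 1 by rw [Scount, if_pos le_rfl]]
    rw [Nat.card_eq_one_iff_unique]
    have harcs : ∀ D : Diagram (2 * 1), D.Perfect → D.arcs = {(1, 2)} := by
      intro D hP
      have hall : ∀ a ∈ D.arcs, a = (1, 2) := by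
        intro a ha
        have hv : 1 ≤ a.1 ∧ a.1 < a.2 ∧ a.2 ≤ 2 * 1 := D.valid a ha
        have : a.1 = 1 ∧ a.2 = 2 := by omega
        exact Prod.ext this.1 this.2
      obtain ⟨a, ha, _⟩ := hP 1 le_rfl (by omega)
      rw [Finset.eq_singleton_iff_unique_mem]
      exact ⟨(hall a ha) ▸ ha, hall⟩
    constructor
    · exact ⟨fun a b => Subtype.ext (diagramExt
        ((harcs a.1 a.2.2.1).trans (harcs b.1 b.2.2.1).symm))⟩
    · refine ⟨⟨⟨{(1, 2)}, ?_, ?_⟩, ?_, ?_, ?_⟩⟩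
      · intro a ha
        rw [Finset.mem_singleton] at ha
        subst ha
        omega
      · intro a ha b hb hne
        rw [Finset.mem_singleton] at ha hb
        rw [ha, hb] at hne
        exact absurd rfl hne
      · rintro ⟨a, hmem, hc2, _, _⟩
        have h0 := hmem 0
        have h1' := hmem 1
        simp only [Finset.mem_singleton] at h0 h1'
        have := hc2 0 1 (by norm_num)
        rw [h0, h1'] at this
        exact absurd this (lt_irrefl _)
      · intro v hv1 hv2
        refine ⟨(1, 2), Finset.mem_singleton_self _, by omega⟩
      · intro hcon
        omega
  · -- h ≥ 2
    rw [Scount, if_neg (by omega)]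
    refine Nat.card_congr (Equiv.subtypeEquivRight fun D => ?_)
    exact and_congr_right fun _ => and_congr_right fun _ =>
      ⟨fun f => f h2, fun s _ => s⟩

lemma card_SigTy (n : ℕ) :
    Nat.card (SigTy n) =
      ∑ h ∈ Finset.Icc 1 n, Scount h * Ncount (2 * h - 1) (n - h) := by
  rw [nat_card_sigma_attach (Finset.Icc 1 n)
    (fun p => CoreTy p.1 × FillTy (2 * p.1 - 1) (n - p.1))]
  rw [← Finset.sum_attach (Finset.Icc 1 n)
    (fun t => Scount t * Ncount (2 * t - 1) (n - t))]
  refine Finset.sum_congr rfl fun p _ => ?_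
  rw [Nat.card_prod, card_fill, card_CoreTy p.1 (Finset.mem_Icc.mp p.2).1]

lemma coeff_F_pow : ∀ (k m : ℕ),
    PowerSeries.coeff m ((Fgf 3) ^ k) = (Ncount k m : ℚ) := by
  intro k
  induction k with
  | zero =>
    intro m
    rw [pow_zero, PowerSeries.coeff_one]
    simp only [Ncount]
    split_ifs <;> simp
  | succ k ih =>
    intro m
    rw [pow_succ', PowerSeries.coeff_mul]
    rw [show Ncount (k + 1) m =
      ∑ p ∈ Finset.HasAntidiagonal.antidiagonal m, fMatch 3 p.1 * Ncount k p.2 from rfl]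
    push_cast
    refine Finset.sum_congr rfl fun p _ => ?_
    rw [ih p.2]
    congr 1
    simp [Fgf, PowerSeries.coeff_mk]

lemma irrcount_zero : Nat.card
    {D : Diagram (2 * 0) // D.Noncrossing 3 ∧ D.Perfect ∧ D.Irreducible} = 1 := by
  rw [Nat.card_eq_one_iff_unique]
  have harcs : ∀ D : Diagram (2 * 0), D.arcs = ∅ := by
    intro D
    rw [Finset.eq_empty_iff_forall_notMem]
    intro a ha
    have := D.valid a ha
    omega
  constructor
  · exact ⟨fun a b => Subtype.ext (diagramExt ((harcs a.1).trans (harcs b.1).symm))⟩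
  · refine ⟨⟨⟨∅, ?_, ?_⟩, ?_, ?_, ?_⟩⟩
    · intro a ha; exact absurd ha (Finset.notMem_empty a)
    · intro a ha; exact absurd ha (Finset.notMem_empty a)
    · rintro ⟨a, hmem, _, _, _⟩
      exact absurd (hmem 0) (Finset.notMem_empty _)
    · intro v hv1 hv2
      omega
    · rintro ⟨ℓ, ⟨w, hw, _⟩, _, _⟩
      exact absurd hw (Finset.notMem_empty w)

end IrrPf
end

/-- `Irr(z) = 1 + Σ_{h ≥ 1} S(h) z^h F_3(z)^{2h-1}`: the constant
coefficient of `Irr` is 1 and for `n ≥ 1` the coefficient of `zⁿ` equals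
`Σ_{h=1}^{n} S(h) · [z^{n-h}] F_3(z)^{2h-1}`. -/
theorem irr_eq_skeleton_sum :
    (IrrCount 0 : ℚ) = 1 ∧
    ∀ n : ℕ, 1 ≤ n →
      (IrrCount n : ℚ) =
        ∑ h ∈ Finset.Icc 1 n, (Scount h : ℚ) *
          PowerSeries.coeff (n - h) ((Fgf 3) ^ (2 * h - 1)) := by
  constructor
  · rw [show IrrCount 0 = Nat.card
      {D : Diagram (2 * 0) // D.Noncrossing 3 ∧ D.Perfect ∧ D.Irreducible} from rfl]
    rw [IrrPf.irrcount_zero]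
    norm_num
  · intro n hn
    have h2 := Nat.card_eq_of_bijective (IrrPf.Phi (n := n))
      ⟨IrrPf.Phi_inj, IrrPf.Phi_surj hn⟩
    have h1 : IrrCount n = Nat.card (IrrPf.SigTy n) := by
      rw [show IrrCount n = Nat.card (IrrPf.IrrTy n) from rfl, ← h2]
    rw [h1, IrrPf.card_SigTy]
    push_cast
    refine Finset.sum_congr rfl fun p _ => ?_
    rw [IrrPf.coeff_F_pow]
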